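/- arXiv:2211.11117 — 7 statements merged into one kernel-verified Lean document; each statement's English description precedes it below -/
import Mathlib

section
/- The sets \overline{ab} and \overline{oa} ∩ \overline{ob} are disjoint (up to lines passing through an endpoint of the segments), and their union equals \overline{oa} ∪ \overline{ob}: a line not passing through the points o, a, b intersects segment [a,b] if and only if it intersects exactly one of the segments [o,a], [o,b]; and it intersects both [o,a] and [o,b] if and only if it intersects both but not [a,b]. -/
/-- The (non-vertical) line in time-space ℝ² parametrized by `(x, v)`:
the set `{(t, x + v t) : t ∈ ℝ}`. -/
def lineSet (p : ℝ × ℝ) : Set (ℝ × ℝ) := {q | ∃ t : ℝ, q = (t, p.1 + p.2 * t)}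

/-- The set of line parameters `(x, v)` whose line intersects the segment `[a, b] ⊆ ℝ²`. -/
def crosses (a b : ℝ × ℝ) : Set (ℝ × ℝ) := {p | (lineSet p ∩ segment ℝ a b).Nonempty}

/-- Signed "height" of `q` relative to the line `p`. -/
def gfun (p q : ℝ × ℝ) : ℝ := q.2 - (p.1 + p.2 * q.1)

lemma mem_lineSet_iff (p q : ℝ × ℝ) : q ∈ lineSet p ↔ gfun p q = 0 := by
  constructor
  · rintro ⟨t, rfl⟩; simp [gfun]
  · intro h
    exact ⟨q.1, by simp [gfun, sub_eq_zero] at h; exact Prod.ext rfl (by simpa using h)⟩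

lemma gfun_combo (p u v : ℝ × ℝ) (s t : ℝ) (hst : s + t = 1) :
    gfun p (s • u + t • v) = s * gfun p u + t * gfun p v := by
  simp only [gfun, Prod.smul_fst, Prod.smul_snd, Prod.fst_add, Prod.snd_add, smul_eq_mul]
  have ht : t = 1 - s := by linarith
  subst ht; ring

lemma crosses_iff (p u v : ℝ × ℝ) (hu : gfun p u ≠ 0) (hv : gfun p v ≠ 0) :
    p ∈ crosses u v ↔ gfun p u * gfun p v < 0 := by
  constructor
  · rintro ⟨q, hqL, hqS⟩
    rw [mem_lineSet_iff] at hqL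
    obtain ⟨s, t, hs, ht, hst, rfl⟩ := hqS
    rw [gfun_combo p u v s t hst] at hqL
    rcases hs.lt_or_eq with hs | hs
    · rcases ht.lt_or_eq with ht | ht
      · rcases lt_trichotomy (gfun p u) 0 with h | h | h
        · rcases lt_trichotomy (gfun p v) 0 with h' | h' | h'
          · nlinarith
          · exact (hv h').elim
          · nlinarith
        · exact absurd h hu
        · rcases lt_trichotomy (gfun p v) 0 with h' | h' | h'
          · nlinarith
          · exact (hv h').elim
          · nlinarith
      · exfalso; apply hu; have : s = 1 := by linarith
        rw [this] at hqL; rw [← ht] at hqL; nlinarith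
    · exfalso; apply hv; have : t = 1 := by linarith
      rw [this] at hqL; rw [← hs] at hqL; nlinarith
  · intro h
    set A := gfun p u with hA
    set B := gfun p v with hB
    have hne : B - A ≠ 0 := by
      intro hc; rw [sub_eq_zero] at hc; rw [← hc] at h; nlinarith
    refine ⟨(B / (B - A)) • u + (-A / (B - A)) • v, ?_, ?_⟩
    · rw [mem_lineSet_iff, gfun_combo p u v _ _ (by field_simp; ring)]
      field_simp; ring
    · refine ⟨B / (B - A), -A / (B - A), ?_, ?_, by field_simp; ring, rfl⟩
      · rcases lt_trichotomy A 0 with hA' | hA' | hA'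
        · have hB' : 0 < B := by nlinarith
          exact le_of_lt (div_pos hB' (by linarith))
        · exact absurd hA' hu
        · have hB' : B < 0 := by nlinarith
          apply le_of_lt; apply div_pos_of_neg_of_neg hB'; linarith
      · rcases lt_trichotomy A 0 with hA' | hA' | hA'
        · have hB' : 0 < B := by nlinarith
          apply le_of_lt; apply div_pos (by linarith) (by linarith)
        · exact absurd hA' hu
        · have hB' : B < 0 := by nlinarith
          apply le_of_lt; apply div_pos_of_neg_of_neg (by linarith) (by linarith)

lemma signs (x A B : ℝ) (hx : x ≠ 0) (hA : A ≠ 0) (hB : B ≠ 0) :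
    ((A * B < 0) ↔ Xor' (x * A < 0) (x * B < 0)) ∧
    ((x * A < 0 ∧ x * B < 0) ↔ (x * A < 0 ∧ x * B < 0 ∧ ¬ A * B < 0)) ∧
    ((A * B < 0 ∨ (x * A < 0 ∧ x * B < 0)) ↔ (x * A < 0 ∨ x * B < 0)) ∧
    ¬ (A * B < 0 ∧ (x * A < 0 ∧ x * B < 0)) := by
  rcases lt_or_gt_of_ne hx with hx' | hx' <;>
  rcases lt_or_gt_of_ne hA with hA' | hA' <;>
  rcases lt_or_gt_of_ne hB with hB' | hB' <;>
  (first | (have h1 : x * A < 0 := by nlinarith)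
         | (have h1 : ¬ x * A < 0 := asymm (show (0:ℝ) < x * A by nlinarith))) <;>
  (first | (have h2 : x * B < 0 := by nlinarith)
         | (have h2 : ¬ x * B < 0 := asymm (show (0:ℝ) < x * B by nlinarith))) <;>
  (first | (have h3 : A * B < 0 := by nlinarith)
         | (have h3 : ¬ A * B < 0 := asymm (show (0:ℝ) < A * B by nlinarith))) <;>
  simp only [Xor', Xor] <;> tauto

/-- A line not passing through the points `o`, `a`, `b` intersects the segment `[a,b]` if and
only if it intersects exactly one of the segments `[o,a]`, `[o,b]`; and it intersects both
`[o,a]` and `[o,b]` if and only if it intersects both but not `[a,b]`.  In particular the sets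
`\overline{ab}` and `\overline{oa} ∩ \overline{ob}` are disjoint and their union is
`\overline{oa} ∪ \overline{ob}` (always restricted to lines avoiding the three vertices). -/
theorem stmt1 (a b : ℝ × ℝ) (p : ℝ × ℝ)
    (h0 : (0 : ℝ × ℝ) ∉ lineSet p) (ha : a ∉ lineSet p) (hb : b ∉ lineSet p) :
    (p ∈ crosses a b ↔ Xor' (p ∈ crosses 0 a) (p ∈ crosses 0 b)) ∧
    (p ∈ crosses 0 a ∩ crosses 0 b ↔
      p ∈ crosses 0 a ∧ p ∈ crosses 0 b ∧ p ∉ crosses a b) ∧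
    (p ∈ crosses a b ∪ (crosses 0 a ∩ crosses 0 b) ↔ p ∈ crosses 0 a ∪ crosses 0 b) ∧
    ¬ (p ∈ crosses a b ∧ p ∈ crosses 0 a ∩ crosses 0 b) := by
  rw [mem_lineSet_iff] at h0 ha hb
  simp only [Set.mem_inter_iff, Set.mem_union,
    crosses_iff p a b ha hb, crosses_iff p 0 a h0 ha, crosses_iff p 0 b h0 hb]
  exact signs _ _ _ h0 ha hb
end

section
/- Let f ∈ 𝓕 and define the dilated density g := 𝒟_q f by g(y,v,r) = f(D_{f,q}^{-1}(y),v,r)/(1+σ_f(D_{f,q}^{-1}(y))). Then the mass function of g satisfies σ_g(y) = σ_f(x)/(1+σ_f(x)) with x = D_{f,q}^{-1}(y); in particular ‖σ_g‖_∞ < 1, i.e. g ∈ 𝓖. -/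
open MeasureTheory Filter Topology

/-- The mass function `σ_f(x) = ∬ r f(x,v,r) dv dr` of a density `f` on position–velocity–length
space (written in curried form `f x v r`). -/
noncomputable def sigmaF (f : ℝ → ℝ → ℝ → ℝ) (x : ℝ) : ℝ :=
  ∫ p : ℝ × ℝ, p.2 * f x p.1 p.2

/-- The class `𝓛` of dominating profiles: nonnegative `γ(v,r)` with
`∬ (v² + r² + 1) γ(v,r) dv dr < ∞`. -/
def MemL (γ : ℝ → ℝ → ℝ) : Prop :=
  (∀ v r : ℝ, 0 ≤ γ v r) ∧
  Integrable (fun p : ℝ × ℝ => (p.1 ^ 2 + p.2 ^ 2 + 1) * γ p.1 p.2)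

/-- The class `𝓕_γ`: nonnegative measurable densities `f(x,v,r)`, `C¹` in `x`, with `f` and
`∂ₓ f` dominated by `γ(v,r)`. -/
def MemFgamma (f : ℝ → ℝ → ℝ → ℝ) (γ : ℝ → ℝ → ℝ) : Prop :=
  Measurable (fun p : ℝ × ℝ × ℝ => f p.1 p.2.1 p.2.2) ∧
  (∀ x v r : ℝ, 0 ≤ f x v r) ∧
  (∀ v r : ℝ, ContDiff ℝ 1 fun x => f x v r) ∧
  (∀ x v r : ℝ, f x v r ≤ γ v r) ∧
  (∀ x v r : ℝ, |deriv (fun x' => f x' v r) x| ≤ γ v r)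

/-- The class `𝓕` of admissible densities: `f ∈ 𝓕_γ` for some `γ ∈ 𝓛`, with everywhere
positive mass function `σ_f`. -/
def MemF (f : ℝ → ℝ → ℝ → ℝ) : Prop :=
  (∃ γ, MemL γ ∧ MemFgamma f γ) ∧ ∀ x : ℝ, 0 < sigmaF f x

/-- The class `𝓖` of dilated densities: `g ∈ 𝓕` with `‖σ_g‖_∞ < 1`. -/
def MemG (g : ℝ → ℝ → ℝ → ℝ) : Prop :=
  MemF g ∧ ∃ c : ℝ, c < 1 ∧ ∀ x : ℝ, sigmaF g x ≤ c

/-- The dilation function `D_{f,a}(b) = b + ∫_a^b σ_f(x) dx`. -/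
noncomputable def Dfun (f : ℝ → ℝ → ℝ → ℝ) (a b : ℝ) : ℝ :=
  b + ∫ x in a..b, sigmaF f x

/-- The contraction function `C_{g,a}(b) = b - ∫_a^b σ_g(y) dy`. -/
noncomputable def Cfun (g : ℝ → ℝ → ℝ → ℝ) (a b : ℝ) : ℝ :=
  b - ∫ x in a..b, sigmaF g x

/-- The dilation operator `𝒟_q f (y,v,r) = f(D_{f,q}⁻¹(y),v,r) / (1 + σ_f(D_{f,q}⁻¹(y)))`. -/
noncomputable def Dop (f : ℝ → ℝ → ℝ → ℝ) (q : ℝ) : ℝ → ℝ → ℝ → ℝ :=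
  fun y v r =>
    f (Function.invFun (Dfun f q) y) v r / (1 + sigmaF f (Function.invFun (Dfun f q) y))

/-- The contraction operator `𝒞_q g (x,v,r) = g(C_{g,q}⁻¹(x),v,r) / (1 - σ_g(C_{g,q}⁻¹(x)))`. -/
noncomputable def Cop (g : ℝ → ℝ → ℝ → ℝ) (q : ℝ) : ℝ → ℝ → ℝ → ℝ :=
  fun x v r =>
    g (Function.invFun (Cfun g q) x) v r / (1 - sigmaF g (Function.invFun (Cfun g q) x))

/-- The spatial shift operator `S_c h (x,v,r) = h(x - c, v, r)`. -/
def Sop (c : ℝ) (h : ℝ → ℝ → ℝ → ℝ) : ℝ → ℝ → ℝ → ℝ := fun x v r => h (x - c) v r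

/-- The free (ideal gas) evolution `𝒯_t f (x,v,r) = f(x - v t, v, r)`. -/
def Tfree (t : ℝ) (f : ℝ → ℝ → ℝ → ℝ) : ℝ → ℝ → ℝ → ℝ := fun x v r => f (x - v * t) v r

/-- The mass flow `j_f⁺(x,v,t) = ∫_{w<v} ∫_x^{x+(v-w)t} ∫ r f(z,w,r) dr dz dw`: the mass with
speed less than `v` crossing the trajectory `s ↦ x + v s` during `[0,t]`. -/
noncomputable def jplus (f : ℝ → ℝ → ℝ → ℝ) (x v t : ℝ) : ℝ :=
  ∫ w in Set.Iio v, (∫ z in x..(x + (v - w) * t), (∫ r : ℝ, r * f z w r))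

/-- The mass flow `j_f⁻(x,v,t) = ∫_{w>v} ∫_{x+(v-w)t}^x ∫ r f(z,w,r) dr dz dw`: the mass with
speed greater than `v` crossing the trajectory `s ↦ x + v s` during `[0,t]`. -/
noncomputable def jminus (f : ℝ → ℝ → ℝ → ℝ) (x v t : ℝ) : ℝ :=
  ∫ w in Set.Ioi v, (∫ z in (x + (v - w) * t)..x, (∫ r : ℝ, r * f z w r))

/-- The net mass flow `j_f = j_f⁺ - j_f⁻`. -/
noncomputable def jflow (f : ℝ → ℝ → ℝ → ℝ) (x v t : ℝ) : ℝ := jplus f x v t - jminus f x v t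

/-- The macroscopic quasiparticle position `u_{g,v,t}(q) = q + v t + j_{𝒞_q g}(q,v,t)`. -/
noncomputable def uqp (g : ℝ → ℝ → ℝ → ℝ) (v t q : ℝ) : ℝ :=
  q + v * t + jflow (Cop g q) q v t

/-- The hard-rod evolution operator `𝒰_t g = S_{o_t} 𝒟_0 𝒯_t 𝒞_0 g` with
`o_t = j_{𝒞_0 g}(0,0,t)`. -/
noncomputable def Uop (t : ℝ) (g : ℝ → ℝ → ℝ → ℝ) : ℝ → ℝ → ℝ → ℝ :=
  Sop (jflow (Cop g 0) 0 0 t) (Dop (Tfree t (Cop g 0)) 0)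

/-- For `f ∈ 𝓕`, the dilated density `g = 𝒟_q f` has mass function
`σ_g(y) = σ_f(x)/(1 + σ_f(x))` with `x = D_{f,q}⁻¹(y)`; in particular `‖σ_g‖_∞ < 1`,
i.e. `g ∈ 𝓖`. -/
theorem stmt6 (f : ℝ → ℝ → ℝ → ℝ) (hf : MemF f) (q : ℝ) :
    (∀ y : ℝ, sigmaF (Dop f q) y =
      sigmaF f (Function.invFun (Dfun f q) y) /
        (1 + sigmaF f (Function.invFun (Dfun f q) y))) ∧
    MemG (Dop f q) := by

  classical
  obtain ⟨⟨γ, ⟨hγ0, hγint⟩, hmeas, hf0, hfC1, hfle, hfd⟩, hσpos⟩ := hf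
  set σ : ℝ → ℝ := sigmaF f with hσdef
  set D : ℝ → ℝ := Dfun f q with hDdef
  set x : ℝ → ℝ := Function.invFun D with hxdef
  -- positivity of 1 + σ
  have hs1 : ∀ z : ℝ, 0 < 1 + σ z := fun z => by have := hσpos z; linarith
  -- γ is a.e. strongly measurable
  have hwpos : ∀ p : ℝ × ℝ, (0:ℝ) < p.1 ^ 2 + p.2 ^ 2 + 1 := fun p => by positivity
  have hγm : AEStronglyMeasurable (fun p : ℝ × ℝ => γ p.1 p.2) volume := by
    have h1 := hγint.aestronglyMeasurable
    have h2 : Measurable fun p : ℝ × ℝ => (p.1 ^ 2 + p.2 ^ 2 + 1 : ℝ)⁻¹ := by fun_prop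
    have h3 : AEStronglyMeasurable
        (fun p : ℝ × ℝ => ((p.1 ^ 2 + p.2 ^ 2 + 1) * γ p.1 p.2) * (p.1 ^ 2 + p.2 ^ 2 + 1)⁻¹)
        volume := h1.mul h2.aestronglyMeasurable
    have : (fun p : ℝ × ℝ => ((p.1 ^ 2 + p.2 ^ 2 + 1) * γ p.1 p.2) * (p.1 ^ 2 + p.2 ^ 2 + 1)⁻¹)
        = fun p : ℝ × ℝ => γ p.1 p.2 := by
      funext p
      field_simp
    rwa [this] at h3
  -- the integrable bound  |r| * γ v r
  have habs_le : ∀ p : ℝ × ℝ, |p.2| * γ p.1 p.2 ≤ (p.1 ^ 2 + p.2 ^ 2 + 1) * γ p.1 p.2 := by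
    intro p
    have h1 : |p.2| ≤ p.1 ^ 2 + p.2 ^ 2 + 1 := by
      nlinarith [sq_nonneg (|p.2| - 1), sq_abs p.2, sq_nonneg p.1]
    exact mul_le_mul_of_nonneg_right h1 (hγ0 _ _)
  have hKint : Integrable (fun p : ℝ × ℝ => |p.2| * γ p.1 p.2) := by
    refine hγint.mono' ((measurable_snd.abs.aestronglyMeasurable).mul hγm) ?_
    refine Filter.Eventually.of_forall fun p => ?_
    have h0 : 0 ≤ |p.2| * γ p.1 p.2 := mul_nonneg (abs_nonneg _) (hγ0 _ _)
    rw [Real.norm_eq_abs, abs_of_nonneg h0]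
    exact habs_le p
  set K : ℝ := ∫ p : ℝ × ℝ, |p.2| * γ p.1 p.2 with hKdef
  have hK0 : 0 ≤ K :=
    integral_nonneg (f := fun p : ℝ × ℝ => |p.2| * γ p.1 p.2)
      fun p => mul_nonneg (abs_nonneg _) (hγ0 _ _)
  -- slicewise measurability and integrability
  have hslice : ∀ z : ℝ, Measurable fun p : ℝ × ℝ => f z p.1 p.2 := by
    intro z
    have : Measurable fun p : ℝ × ℝ => (z, p) := measurable_const.prodMk measurable_id
    exact hmeas.comp this
  have hFm : ∀ z : ℝ, AEStronglyMeasurable (fun p : ℝ × ℝ => p.2 * f z p.1 p.2) volume :=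
    fun z => (measurable_snd.mul (hslice z)).aestronglyMeasurable
  have hFbd : ∀ z : ℝ, ∀ p : ℝ × ℝ, ‖p.2 * f z p.1 p.2‖ ≤ |p.2| * γ p.1 p.2 := by
    intro z p
    rw [Real.norm_eq_abs, abs_mul, abs_of_nonneg (hf0 _ _ _)]
    exact mul_le_mul_of_nonneg_left (hfle _ _ _) (abs_nonneg _)
  have hFint : ∀ z : ℝ, Integrable (fun p : ℝ × ℝ => p.2 * f z p.1 p.2) := fun z =>
    hKint.mono' (hFm z) (Filter.Eventually.of_forall (hFbd z))
  -- σ ≤ K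
  have hσleK : ∀ z : ℝ, σ z ≤ K := by
    intro z
    refine integral_mono (hFint z) hKint fun p => ?_
    calc p.2 * f z p.1 p.2 ≤ |p.2 * f z p.1 p.2| := le_abs_self _
      _ ≤ |p.2| * γ p.1 p.2 := hFbd z p
  -- differentiability in x of f, and measurability of the parametric derivative
  have hder : ∀ (v r z : ℝ), HasDerivAt (fun x' => f x' v r) (deriv (fun x' => f x' v r) z) z :=
    fun v r z => (((hfC1 v r).differentiable one_ne_zero) z).hasDerivAt
  have hd_meas : ∀ z : ℝ, Measurable fun p : ℝ × ℝ => deriv (fun x' => f x' p.1 p.2) z := by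
    intro z
    have hseq : ∀ n : ℕ, Measurable fun p : ℝ × ℝ =>
        ((n : ℝ) + 1) * (f (z + 1 / ((n : ℝ) + 1)) p.1 p.2 - f z p.1 p.2) := fun n =>
      measurable_const.mul ((hslice _).sub (hslice z))
    refine measurable_of_tendsto_metrizable hseq ?_
    rw [tendsto_pi_nhds]
    intro p
    have h := hasDerivAt_iff_tendsto_slope.mp (hder p.1 p.2 z)
    have hu : Filter.Tendsto (fun n : ℕ => z + 1 / ((n : ℝ) + 1)) Filter.atTop (𝓝[≠] z) := by
      rw [tendsto_nhdsWithin_iff]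
      constructor
      · have := tendsto_one_div_add_atTop_nhds_zero_nat (𝕜 := ℝ)
        have h2 := this.const_add z
        simpa using h2
      · refine Filter.Eventually.of_forall fun n => ?_
        have : (0:ℝ) < 1 / ((n : ℝ) + 1) := by positivity
        simp only [Set.mem_compl_iff, Set.mem_singleton_iff]
        intro hcontra
        nlinarith [hcontra]
    have h2 := h.comp hu
    convert h2 using 1
    funext n
    have hn : ((n : ℝ) + 1) ≠ 0 := by positivity
    simp only [Function.comp_apply, slope_def_field]
    field_simp
    ring
  -- derivative of σ
  set σ' : ℝ → ℝ := fun z => ∫ p : ℝ × ℝ, p.2 * deriv (fun x' => f x' p.1 p.2) z with hσ'def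
  have hσderiv : ∀ z : ℝ, HasDerivAt σ (σ' z) z := by
    intro z
    have := hasDerivAt_integral_of_dominated_loc_of_deriv_le (F := fun z (p : ℝ × ℝ) =>
        p.2 * f z p.1 p.2) (F' := fun z (p : ℝ × ℝ) => p.2 * deriv (fun x' => f x' p.1 p.2) z)
        (bound := fun p : ℝ × ℝ => |p.2| * γ p.1 p.2) (x₀ := z) (s := Set.univ) Filter.univ_mem
        (Filter.Eventually.of_forall hFm) (hFint z)
        ((measurable_snd.mul (hd_meas z)).aestronglyMeasurable)
        (Filter.Eventually.of_forall fun p => fun w _ => by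
          rw [Real.norm_eq_abs, abs_mul]
          exact mul_le_mul_of_nonneg_left (hfd _ _ _) (abs_nonneg _))
        hKint
        (Filter.Eventually.of_forall fun p => fun w _ => (hder p.1 p.2 w).const_mul p.2)
    exact this.2
  have hσ'leK : ∀ z : ℝ, |σ' z| ≤ K := by
    intro z
    rw [hσ'def]
    calc |∫ p : ℝ × ℝ, p.2 * deriv (fun x' => f x' p.1 p.2) z|
        ≤ ∫ p : ℝ × ℝ, |p.2| * γ p.1 p.2 := by
          rw [← Real.norm_eq_abs]
          refine norm_integral_le_of_norm_le hKint (Filter.Eventually.of_forall fun p => ?_)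
          rw [Real.norm_eq_abs, abs_mul]
          exact mul_le_mul_of_nonneg_left (hfd _ _ _) (abs_nonneg _)
      _ = K := rfl
  have hσcont : Continuous σ :=
    continuous_iff_continuousAt.mpr fun z => (hσderiv z).continuousAt
  have hσ'cont : Continuous σ' := by
    refine continuous_of_dominated (bound := fun p : ℝ × ℝ => |p.2| * γ p.1 p.2)
      (fun z => (measurable_snd.mul (hd_meas z)).aestronglyMeasurable)
      (fun z => Filter.Eventually.of_forall fun p => ?_) hKint
      (Filter.Eventually.of_forall fun p => ?_)
    · rw [Real.norm_eq_abs, abs_mul]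
      exact mul_le_mul_of_nonneg_left (hfd _ _ _) (abs_nonneg _)
    · exact continuous_const.mul (contDiff_one_iff_deriv.mp (hfC1 p.1 p.2)).2
  -- properties of D
  have hD : ∀ b : ℝ, HasDerivAt D (1 + σ b) b := by
    intro b
    have h1 : HasDerivAt (fun b => ∫ z in q..b, σ z) (σ b) b :=
      intervalIntegral.integral_hasDerivAt_right (hσcont.intervalIntegrable q b)
        ⟨Set.univ, Filter.univ_mem, hσcont.aestronglyMeasurable⟩ hσcont.continuousAt
    have h2 := (hasDerivAt_id' b).add h1
    exact h2
  have hDmono : StrictMono D :=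
    strictMono_of_deriv_pos fun z => by rw [(hD z).deriv]; exact hs1 z
  have hDcont : Continuous D :=
    continuous_iff_continuousAt.mpr fun z => (hD z).continuousAt
  have hDsurj : Function.Surjective D := by
    refine hDcont.surjective ?_ ?_
    · refine Filter.tendsto_atTop_mono' _ ?_ Filter.tendsto_id
      filter_upwards [Filter.eventually_ge_atTop q] with b hb
      have : (0:ℝ) ≤ ∫ z in q..b, σ z :=
        intervalIntegral.integral_nonneg hb fun u _ => (hσpos u).le
      simp only [hDdef, Dfun, id]
      linarith
    · refine Filter.tendsto_atBot_mono' _ ?_ Filter.tendsto_id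
      filter_upwards [Filter.eventually_le_atBot q] with b hb
      have h1 : (0:ℝ) ≤ ∫ z in b..q, σ z :=
        intervalIntegral.integral_nonneg hb fun u _ => (hσpos u).le
      have h2 : (∫ z in q..b, σ z) = -∫ z in b..q, σ z :=
        intervalIntegral.integral_symm b q
      simp only [hDdef, Dfun, id]
      linarith
  have hright : ∀ y : ℝ, D (x y) = y := fun y => Function.rightInverse_invFun hDsurj y
  -- continuity and derivative of the inverse
  have hxcont : Continuous x := by
    set e := StrictMono.orderIsoOfSurjective D hDmono hDsurj with hedef
    have hxe : x = fun y => e.symm y := by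
      funext y
      apply hDmono.injective
      rw [hright y]
      exact (StrictMono.orderIsoOfSurjective_self_symm_apply D hDmono hDsurj y).symm
    rw [hxe]
    exact e.symm.continuous
  have hx' : ∀ y : ℝ, HasDerivAt x (1 + σ (x y))⁻¹ y := fun y =>
    HasDerivAt.of_local_left_inverse hxcont.continuousAt (hD (x y)) (hs1 (x y)).ne'
      (Filter.Eventually.of_forall hright)
  -- Part 1 : the mass function of the dilated density
  have hpart1 : ∀ y : ℝ, sigmaF (Dop f q) y = σ (x y) / (1 + σ (x y)) := by
    intro y
    have : sigmaF (Dop f q) y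
        = ∫ p : ℝ × ℝ, p.2 * f (x y) p.1 p.2 / (1 + σ (x y)) := by
      simp only [sigmaF, Dop, mul_div_assoc]
      rfl
    rw [this]
    rw [integral_div]
    rfl
  refine ⟨hpart1, ?_⟩
  -- bound used for derivatives of g
  have hGd : ∀ (v r y : ℝ), HasDerivAt (fun y' => Dop f q y' v r)
      ((deriv (fun x' => f x' v r) (x y) * (1 + σ (x y))⁻¹ * (1 + σ (x y))
        - f (x y) v r * (σ' (x y) * (1 + σ (x y))⁻¹)) / (1 + σ (x y)) ^ 2) y := by
    intro v r y
    have hnum : HasDerivAt (fun y' => f (x y') v r)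
        (deriv (fun x' => f x' v r) (x y) * (1 + σ (x y))⁻¹) y :=
      (hder v r (x y)).comp y (hx' y)
    have hden : HasDerivAt (fun y' => 1 + σ (x y'))
        (σ' (x y) * (1 + σ (x y))⁻¹) y :=
      ((hσderiv (x y)).comp y (hx' y)).const_add 1
    exact hnum.div hden (hs1 (x y)).ne'
  have hGdbd : ∀ (v r y : ℝ),
      |(deriv (fun x' => f x' v r) (x y) * (1 + σ (x y))⁻¹ * (1 + σ (x y))
        - f (x y) v r * (σ' (x y) * (1 + σ (x y))⁻¹)) / (1 + σ (x y)) ^ 2|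
      ≤ (1 + K) * γ v r := by
    intro v r y
    set t : ℝ := 1 + σ (x y) with htdef
    have ht1 : (1:ℝ) ≤ t := by have := hσpos (x y); simp only [htdef]; linarith
    have ht0 : (0:ℝ) < t := lt_of_lt_of_le one_pos ht1
    have htinv : t⁻¹ ≤ 1 := by
      rw [inv_le_one_iff₀]
      right; exact ht1
    have htinv0 : (0:ℝ) ≤ t⁻¹ := (inv_pos.mpr ht0).le
    set a : ℝ := deriv (fun x' => f x' v r) (x y)
    set c : ℝ := f (x y) v r
    set d : ℝ := σ' (x y)
    have ha : |a| ≤ γ v r := hfd _ _ _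
    have hc0 : 0 ≤ c := hf0 _ _ _
    have hcγ : c ≤ γ v r := hfle _ _ _
    have hdK : |d| ≤ K := hσ'leK _
    have hγ0' : 0 ≤ γ v r := hγ0 _ _
    have hsimp : a * t⁻¹ * t = a := by field_simp
    have habs2 : |c * (d * t⁻¹)| ≤ γ v r * K := by
      rw [abs_mul, abs_mul, abs_of_nonneg hc0, abs_of_nonneg htinv0]
      calc c * (|d| * t⁻¹) ≤ γ v r * (|d| * t⁻¹) :=
            mul_le_mul_of_nonneg_right hcγ (by positivity)
        _ ≤ γ v r * (K * t⁻¹) :=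
            mul_le_mul_of_nonneg_left (mul_le_mul_of_nonneg_right hdK htinv0) hγ0'
        _ ≤ γ v r * (K * 1) :=
            mul_le_mul_of_nonneg_left (mul_le_mul_of_nonneg_left htinv hK0) hγ0'
        _ = γ v r * K := by ring
    have hnum : |a * t⁻¹ * t - c * (d * t⁻¹)| ≤ (1 + K) * γ v r := by
      rw [hsimp]
      calc |a - c * (d * t⁻¹)| ≤ |a| + |c * (d * t⁻¹)| := abs_sub _ _
        _ ≤ γ v r + γ v r * K := add_le_add ha habs2
        _ = (1 + K) * γ v r := by ring
    calc |(a * t⁻¹ * t - c * (d * t⁻¹)) / t ^ 2|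
        = |a * t⁻¹ * t - c * (d * t⁻¹)| / t ^ 2 := by
          rw [abs_div, abs_of_pos (by positivity : (0:ℝ) < t ^ 2)]
      _ ≤ |a * t⁻¹ * t - c * (d * t⁻¹)| := by
          apply div_le_self (abs_nonneg _)
          nlinarith
      _ ≤ (1 + K) * γ v r := hnum
  constructor
  · -- MemF (Dop f q)
    constructor
    · refine ⟨fun v r => (1 + K) * γ v r, ⟨fun v r => mul_nonneg (by linarith) (hγ0 v r), ?_⟩,
        ?_, ?_, ?_, ?_, ?_⟩
      · have h := hγint.const_mul (1 + K)
        have : (fun p : ℝ × ℝ => (1 + K) * ((p.1 ^ 2 + p.2 ^ 2 + 1) * γ p.1 p.2))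
            = fun p : ℝ × ℝ => (p.1 ^ 2 + p.2 ^ 2 + 1) * ((1 + K) * γ p.1 p.2) := by
          funext p; ring
        rwa [this] at h
      · -- measurability of g
        have h1 : Measurable fun p : ℝ × ℝ × ℝ => f (x p.1) p.2.1 p.2.2 :=
          hmeas.comp (((hxcont.measurable.comp measurable_fst)).prodMk measurable_snd)
        have h2 : Measurable fun p : ℝ × ℝ × ℝ => 1 + σ (x p.1) :=
          ((hσcont.comp hxcont).measurable.comp measurable_fst).const_add 1
        exact h1.div h2
      · exact fun y v r => div_nonneg (hf0 _ _ _) (hs1 (x y)).le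
      · -- C¹ in the space variable
        intro v r
        refine contDiff_one_iff_deriv.mpr ⟨fun y => (hGd v r y).differentiableAt, ?_⟩
        have hde : deriv (fun y' => Dop f q y' v r) = fun y =>
            (deriv (fun x' => f x' v r) (x y) * (1 + σ (x y))⁻¹ * (1 + σ (x y))
              - f (x y) v r * (σ' (x y) * (1 + σ (x y))⁻¹)) / (1 + σ (x y)) ^ 2 :=
          funext fun y => (hGd v r y).deriv
        rw [hde]
        have htc : Continuous fun y => 1 + σ (x y) :=
          continuous_const.add (hσcont.comp hxcont)
        have htinv : Continuous fun y => (1 + σ (x y))⁻¹ :=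
          htc.inv₀ fun y => (hs1 (x y)).ne'
        have hA : Continuous fun y => deriv (fun x' => f x' v r) (x y) :=
          (contDiff_one_iff_deriv.mp (hfC1 v r)).2.comp hxcont
        have hC : Continuous fun y => f (x y) v r :=
          ((hfC1 v r).continuous).comp hxcont
        have hS : Continuous fun y => σ' (x y) := hσ'cont.comp hxcont
        exact (((hA.mul htinv).mul htc).sub (hC.mul (hS.mul htinv))).div (htc.pow 2)
          fun y => pow_ne_zero _ (hs1 (x y)).ne'
      · -- g ≤ γ'
        intro y v r
        have h0 : Dop f q y v r = f (x y) v r / (1 + σ (x y)) := rfl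
        rw [h0]
        have hp := hσpos (x y)
        have h1 : f (x y) v r / (1 + σ (x y)) ≤ f (x y) v r :=
          div_le_self (hf0 _ _ _) (by linarith)
        have h2 : f (x y) v r ≤ γ v r := hfle _ _ _
        nlinarith [hγ0 v r]
      · -- derivative bound
        intro y v r
        rw [(hGd v r y).deriv]
        exact hGdbd v r y
    · -- positivity of σ_g
      intro y
      rw [hpart1 y]
      exact div_pos (hσpos (x y)) (hs1 (x y))
  · -- the uniform bound < 1
    refine ⟨K / (1 + K), ?_, ?_⟩
    · rw [div_lt_one (by linarith : (0:ℝ) < 1 + K)]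
      linarith
    · intro y
      rw [hpart1 y]
      rw [div_le_div_iff₀ (hs1 (x y)) (by linarith : (0:ℝ) < 1 + K)]
      have h1 := hσleK (x y)
      nlinarith
end

section
/- The contraction C_{g,q} is the inverse of the dilation D_{f,q} when g = 𝒟_q f: that is, C_{g,q}(D_{f,q}(x)) = x for all x ∈ ℝ. -/
open MeasureTheory Filter Topology

theorem sigma_cont {f : ℝ → ℝ → ℝ → ℝ} (hf : MemF f) : Continuous (sigmaF f) := by
  obtain ⟨⟨γ, ⟨hγ0, hγint⟩, hmeas, hf0, hfC1, hfle, _⟩, _⟩ := hf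
  have hγm : AEStronglyMeasurable (fun p : ℝ × ℝ => γ p.1 p.2) volume := by
    have h1 : AEStronglyMeasurable
        (fun p : ℝ × ℝ => (p.1 ^ 2 + p.2 ^ 2 + 1) * γ p.1 p.2) volume :=
      hγint.aestronglyMeasurable
    have h2 : Continuous (fun p : ℝ × ℝ => p.1 ^ 2 + p.2 ^ 2 + 1) := by continuity
    have h3 : Continuous (fun p : ℝ × ℝ => (p.1 ^ 2 + p.2 ^ 2 + 1)⁻¹) :=
      h2.inv₀ (fun p => by positivity)
    have := h1.mul h3.aestronglyMeasurable
    refine this.congr (Filter.Eventually.of_forall fun p => ?_)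
    have hne : (p.1 : ℝ) ^ 2 + p.2 ^ 2 + 1 ≠ 0 := by positivity
    simp only [Pi.mul_apply]
    field_simp
  have hbound : Integrable (fun p : ℝ × ℝ => |p.2| * γ p.1 p.2) := by
    refine hγint.mono (continuous_snd.abs.aestronglyMeasurable.mul hγm)
      (Filter.Eventually.of_forall fun p => ?_)
    have h1 : 0 ≤ γ p.1 p.2 := hγ0 _ _
    have h2 : |p.2| ≤ p.1 ^ 2 + p.2 ^ 2 + 1 := by nlinarith [abs_nonneg p.2, sq_abs p.2]
    rw [Real.norm_eq_abs, Real.norm_eq_abs, abs_mul, abs_abs, abs_of_nonneg h1,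
      abs_of_nonneg (by nlinarith : (0:ℝ) ≤ (p.1 ^ 2 + p.2 ^ 2 + 1) * γ p.1 p.2)]
    exact mul_le_mul_of_nonneg_right h2 h1
  rw [continuous_iff_continuousAt]
  intro x₀
  refine continuousAt_of_dominated (bound := fun p : ℝ × ℝ => |p.2| * γ p.1 p.2)
    (Filter.Eventually.of_forall fun x => ?_)
    (Filter.Eventually.of_forall fun x => Filter.Eventually.of_forall fun p => ?_)
    hbound (Filter.Eventually.of_forall fun p => ?_)
  · exact (measurable_snd.mul
      (hmeas.comp (measurable_const.prodMk measurable_id))).aestronglyMeasurable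
  · rw [Real.norm_eq_abs, abs_mul, abs_of_nonneg (hf0 x p.1 p.2)]
    exact mul_le_mul_of_nonneg_left (hfle x p.1 p.2) (abs_nonneg _)
  · exact continuousAt_const.mul ((hfC1 p.1 p.2).continuous.continuousAt)

/-- The contraction `C_{g,q}` is the inverse of the dilation `D_{f,q}` when `g = 𝒟_q f`:
`C_{g,q}(D_{f,q}(x)) = x` for all `x`. -/
theorem stmt7 (f : ℝ → ℝ → ℝ → ℝ) (hf : MemF f) (q x : ℝ) :
    Cfun (Dop f q) q (Dfun f q x) = x := by
  have hσc : Continuous (sigmaF f) := sigma_cont hf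
  have hσpos : ∀ y, 0 < sigmaF f y := hf.2
  -- derivative of D
  have hD : ∀ b : ℝ, HasDerivAt (Dfun f q) (1 + sigmaF f b) b := by
    intro b
    have h1 : HasDerivAt (fun u => ∫ y in q..u, sigmaF f y) (sigmaF f b) b :=
      intervalIntegral.integral_hasDerivAt_right (hσc.intervalIntegrable q b)
        hσc.stronglyMeasurable.stronglyMeasurableAtFilter
        hσc.continuousAt
    exact (hasDerivAt_id b).add h1
  have hDmono : StrictMono (Dfun f q) := by
    apply strictMono_of_deriv_pos
    intro b
    rw [(hD b).deriv]
    linarith [hσpos b]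
  have hDcont : Continuous (Dfun f q) :=
    continuous_iff_continuousAt.2 fun b => (hD b).continuousAt
  have hDq : Dfun f q q = q := by simp [Dfun]
  have hDle : ∀ b ≤ q, Dfun f q b ≤ b := by
    intro b hb
    have h1 : 0 ≤ ∫ y in b..q, sigmaF f y :=
      intervalIntegral.integral_nonneg hb (fun u _ => (hσpos u).le)
    have h2 : ∫ y in q..b, sigmaF f y = -∫ y in b..q, sigmaF f y :=
      intervalIntegral.integral_symm b q
    simp only [Dfun, h2]
    linarith
  have hDge : ∀ b, q ≤ b → b ≤ Dfun f q b := by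
    intro b hb
    have h1 : 0 ≤ ∫ y in q..b, sigmaF f y :=
      intervalIntegral.integral_nonneg hb (fun u _ => (hσpos u).le)
    simp only [Dfun]; linarith
  have hDsurj : Function.Surjective (Dfun f q) := by
    intro y
    have hab : min y q ≤ max y q := min_le_max
    have h1 : Dfun f q (min y q) ≤ y :=
      le_trans (hDle _ (min_le_right _ _)) (min_le_left _ _)
    have h2 : y ≤ Dfun f q (max y q) :=
      le_trans (le_max_left _ _) (hDge _ (le_max_right _ _))
    obtain ⟨c, _, hc⟩ := intermediate_value_Icc hab hDcont.continuousOn ⟨h1, h2⟩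
    exact ⟨c, hc⟩
  set I := Function.invFun (Dfun f q) with hI
  have hLeft : Function.LeftInverse I (Dfun f q) :=
    Function.leftInverse_invFun hDmono.injective
  have hRight : Function.RightInverse I (Dfun f q) :=
    Function.rightInverse_invFun hDsurj
  -- continuity of the inverse
  have hIcont : Continuous I := by
    let e : ℝ ≃o ℝ := StrictMono.orderIsoOfSurjective _ hDmono hDsurj
    have he : ∀ y, I y = e.symm y := by
      intro y
      apply hDmono.injective
      rw [hRight y]
      exact (e.apply_symm_apply y).symm
    rw [funext he]
    exact e.symm.continuous
  set g := Dop f q with hg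
  have hσg : ∀ y, sigmaF g y = sigmaF f (I y) / (1 + sigmaF f (I y)) := by
    intro y
    have hfun : (fun p : ℝ × ℝ => p.2 * g y p.1 p.2)
        = fun p : ℝ × ℝ => (p.2 * f (I y) p.1 p.2) / (1 + sigmaF f (I y)) := by
      funext p
      simp only [g, Dop, ← hI]
      ring
    rw [sigmaF, hfun, integral_div]
    rfl
  have hne : ∀ u, (1 : ℝ) + sigmaF f u ≠ 0 := fun u => by linarith [hσpos u]
  have hσgc : Continuous (sigmaF g) := by
    rw [funext hσg]
    exact ((hσc.comp hIcont).div ((continuous_const.add hσc).comp hIcont)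
      (fun y => hne (I y)))
  have key : (∫ y in q..(Dfun f q x), sigmaF g y) = ∫ u in q..x, sigmaF f u := by
    have hcv := intervalIntegral.integral_comp_smul_deriv (a := q) (b := x)
      (f := Dfun f q) (f' := fun u => 1 + sigmaF f u) (g := sigmaF g)
      (fun u _ => hD u) ((continuous_const.add hσc).continuousOn) hσgc
    rw [hDq] at hcv
    rw [← hcv]
    apply intervalIntegral.integral_congr
    intro u _
    simp only [Function.comp, smul_eq_mul, hσg, hLeft u]
    rw [mul_div_assoc']
    exact mul_div_cancel_left₀ _ (hne u)
  rw [Cfun, key, Dfun]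
  ring
end

section
/- The operators 𝒟_q : 𝓕 → 𝓖 and 𝒞_q : 𝓖 → 𝓕 are mutually inverse bijections: 𝒞_q ∘ 𝒟_q = id on 𝓕 and 𝒟_q ∘ 𝒞_q = id on 𝓖. -/
open MeasureTheory Filter Topology

namespace HR

open MeasureTheory Set Filter Topology

noncomputable def bnd (γ : ℝ → ℝ → ℝ) : ℝ × ℝ → ℝ := fun p => (p.1 ^ 2 + p.2 ^ 2 + 1) * γ p.1 p.2

noncomputable def Mc (γ : ℝ → ℝ → ℝ) : ℝ := ∫ p : ℝ × ℝ, bnd γ p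

noncomputable def sigD (f : ℝ → ℝ → ℝ → ℝ) (x : ℝ) : ℝ :=
  ∫ p : ℝ × ℝ, p.2 * deriv (fun x' => f x' p.1 p.2) x

variable {f : ℝ → ℝ → ℝ → ℝ} {γ : ℝ → ℝ → ℝ}

theorem bnd_nonneg (hγ : MemL γ) (p : ℝ × ℝ) : 0 ≤ bnd γ p :=
  mul_nonneg (by positivity) (hγ.1 _ _)

theorem bnd_int (hγ : MemL γ) : Integrable (bnd γ) := hγ.2

theorem Mc_nonneg (hγ : MemL γ) : 0 ≤ Mc γ := integral_nonneg (bnd_nonneg hγ)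

theorem abs_le_bnd (hγ : MemL γ) (hf : MemFgamma f γ) (x : ℝ) (p : ℝ × ℝ) :
    |p.2 * f x p.1 p.2| ≤ bnd γ p := by
  have h1 : |p.2 * f x p.1 p.2| = |p.2| * f x p.1 p.2 := by
    rw [abs_mul, abs_of_nonneg (hf.2.1 x p.1 p.2)]
  rw [h1, bnd]
  have h2 : |p.2| ≤ p.1 ^ 2 + p.2 ^ 2 + 1 := by nlinarith [sq_abs p.2, abs_nonneg p.2, sq_nonneg (|p.2| - 1), sq_nonneg p.1]
  exact mul_le_mul h2 (hf.2.2.2.1 x p.1 p.2) (hf.2.1 x p.1 p.2) (by positivity)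

theorem abs_deriv_le_bnd (hγ : MemL γ) (hf : MemFgamma f γ) (x : ℝ) (p : ℝ × ℝ) :
    |p.2 * deriv (fun x' => f x' p.1 p.2) x| ≤ bnd γ p := by
  rw [abs_mul, bnd]
  have h2 : |p.2| ≤ p.1 ^ 2 + p.2 ^ 2 + 1 := by nlinarith [sq_abs p.2, abs_nonneg p.2, sq_nonneg (|p.2| - 1), sq_nonneg p.1]
  exact mul_le_mul h2 (hf.2.2.2.2 x p.1 p.2) (abs_nonneg _) (by positivity)

theorem measF (hf : MemFgamma f γ) (x : ℝ) :
    Measurable fun p : ℝ × ℝ => p.2 * f x p.1 p.2 :=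
  measurable_snd.mul (hf.1.comp (measurable_const.prodMk measurable_id))

theorem measDeriv (hf : MemFgamma f γ) (x : ℝ) :
    Measurable fun p : ℝ × ℝ => deriv (fun x' => f x' p.1 p.2) x := by
  have key : ∀ p : ℝ × ℝ, Tendsto
      (fun n : ℕ => (f (x + ((n : ℝ) + 1)⁻¹) p.1 p.2 - f x p.1 p.2) / ((n : ℝ) + 1)⁻¹)
      atTop (𝓝 (deriv (fun x' => f x' p.1 p.2) x)) := by
    intro p
    have hd : HasDerivAt (fun x' => f x' p.1 p.2) (deriv (fun x' => f x' p.1 p.2) x) x :=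
      (((hf.2.2.1 p.1 p.2).differentiable one_ne_zero) x).hasDerivAt
    have hslope := hasDerivAt_iff_tendsto_slope.1 hd
    have hseq : Tendsto (fun n : ℕ => x + ((n : ℝ) + 1)⁻¹) atTop (𝓝[≠] x) := by
      apply tendsto_nhdsWithin_of_tendsto_nhds_of_eventually_within
      · have : Tendsto (fun n : ℕ => ((n : ℝ) + 1)⁻¹) atTop (𝓝 0) :=
          tendsto_one_div_add_atTop_nhds_zero_nat.congr (fun n => by rw [one_div])
        simpa using tendsto_const_nhds.add this
      · filter_upwards with n
        simp only [mem_compl_iff, mem_singleton_iff, add_eq_left]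
        positivity
    have := hslope.comp hseq
    refine this.congr fun n => ?_
    simp [slope_def_field, div_eq_mul_inv]
  apply measurable_of_tendsto_metrizable
    (f := fun n (p : ℝ × ℝ) => (f (x + ((n : ℝ) + 1)⁻¹) p.1 p.2 - f x p.1 p.2) / ((n : ℝ) + 1)⁻¹)
  · intro n
    exact ((hf.1.comp (measurable_const.prodMk measurable_id)).sub
      (hf.1.comp (measurable_const.prodMk measurable_id))).div_const _
  · rw [tendsto_pi_nhds]
    exact key

end HR
namespace HR
open MeasureTheory Set Filter Topology
variable {f : ℝ → ℝ → ℝ → ℝ} {γ : ℝ → ℝ → ℝ}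

theorem sig_int (hγ : MemL γ) (hf : MemFgamma f γ) (x : ℝ) :
    Integrable (fun p : ℝ × ℝ => p.2 * f x p.1 p.2) :=
  (bnd_int hγ).mono' (measF hf x).aestronglyMeasurable
    (Filter.Eventually.of_forall fun p => by
      rw [Real.norm_eq_abs]; exact abs_le_bnd hγ hf x p)

theorem sig_abs_le (hγ : MemL γ) (hf : MemFgamma f γ) (x : ℝ) : |sigmaF f x| ≤ Mc γ := by
  rw [← Real.norm_eq_abs]
  exact norm_integral_le_of_norm_le (bnd_int hγ)
    (Filter.Eventually.of_forall fun p => by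
      rw [Real.norm_eq_abs]; exact abs_le_bnd hγ hf x p)

theorem sig_hasDeriv (hγ : MemL γ) (hf : MemFgamma f γ) (x : ℝ) :
    HasDerivAt (sigmaF f) (sigD f x) x := by
  have h := hasDerivAt_integral_of_dominated_loc_of_deriv_le (μ := volume)
    (F := fun x (p : ℝ × ℝ) => p.2 * f x p.1 p.2)
    (F' := fun x (p : ℝ × ℝ) => p.2 * deriv (fun x' => f x' p.1 p.2) x)
    (x₀ := x) (bound := bnd γ) (Metric.ball_mem_nhds x one_pos)
    (Filter.Eventually.of_forall fun x' => (measF hf x').aestronglyMeasurable)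
    (sig_int hγ hf x)
    ((measurable_snd.mul (measDeriv hf x)).aestronglyMeasurable)
    (Filter.Eventually.of_forall fun p => fun x' _ => by
      rw [Real.norm_eq_abs]; exact abs_deriv_le_bnd hγ hf x' p)
    (bnd_int hγ)
    (Filter.Eventually.of_forall fun p => fun x' _ =>
      ((((hf.2.2.1 p.1 p.2).differentiable one_ne_zero) x').hasDerivAt).const_mul p.2)
  exact h.2

theorem sigD_abs_le (hγ : MemL γ) (hf : MemFgamma f γ) (x : ℝ) : |sigD f x| ≤ Mc γ := by
  rw [← Real.norm_eq_abs]
  exact norm_integral_le_of_norm_le (bnd_int hγ)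
    (Filter.Eventually.of_forall fun p => by
      rw [Real.norm_eq_abs]; exact abs_deriv_le_bnd hγ hf x p)

theorem sig_cont (hγ : MemL γ) (hf : MemFgamma f γ) : Continuous (sigmaF f) :=
  continuous_iff_continuousAt.2 fun x => (sig_hasDeriv hγ hf x).differentiableAt.continuousAt

theorem sigD_cont (hγ : MemL γ) (hf : MemFgamma f γ) : Continuous (sigD f) := by
  apply continuous_of_dominated (bound := bnd γ)
    (F := fun x (p : ℝ × ℝ) => p.2 * deriv (fun x' => f x' p.1 p.2) x)
  · exact fun x => (measurable_snd.mul (measDeriv hf x)).aestronglyMeasurable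
  · exact fun x => Filter.Eventually.of_forall fun p => by
      rw [Real.norm_eq_abs]; exact abs_deriv_le_bnd hγ hf x p
  · exact bnd_int hγ
  · exact Filter.Eventually.of_forall fun p =>
      continuous_const.mul ((hf.2.2.1 p.1 p.2).continuous_deriv le_rfl)

theorem sig_contDiff (hγ : MemL γ) (hf : MemFgamma f γ) : ContDiff ℝ 1 (sigmaF f) := by
  rw [contDiff_one_iff_deriv]
  refine ⟨fun x => (sig_hasDeriv hγ hf x).differentiableAt, ?_⟩
  have : deriv (sigmaF f) = sigD f := funext fun x => (sig_hasDeriv hγ hf x).deriv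
  rw [this]; exact sigD_cont hγ hf

end HR
namespace HR
open MeasureTheory Set Filter Topology intervalIntegral

noncomputable def Tmap (d : ℝ → ℝ) (q : ℝ) : ℝ → ℝ := fun b => q + ∫ x in q..b, d x

noncomputable def phi (d : ℝ → ℝ) (q : ℝ) : ℝ → ℝ := Function.invFun (Tmap d q)

variable {d : ℝ → ℝ} {q ε M' : ℝ}

theorem Tmap_hasDeriv (hd : Continuous d) (b : ℝ) : HasDerivAt (Tmap d q) (d b) b :=
  (integral_hasDerivAt_right (hd.intervalIntegrable _ _)
    hd.stronglyMeasurable.stronglyMeasurableAtFilter hd.continuousAt).const_add q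

theorem Tmap_cont (hd : Continuous d) : Continuous (Tmap d q) :=
  continuous_iff_continuousAt.2 fun b => (Tmap_hasDeriv hd b).differentiableAt.continuousAt

theorem Tmap_mono (hd : Continuous d) (hε : ∀ x, ε ≤ d x) (hεp : 0 < ε) :
    StrictMono (Tmap d q) :=
  strictMono_of_deriv_pos fun b => by
    rw [(Tmap_hasDeriv hd b).deriv]; exact lt_of_lt_of_le hεp (hε b)

theorem Tmap_self : Tmap d q q = q := by simp [Tmap]

theorem Tmap_sub (hd : Continuous d) (a b : ℝ) :
    Tmap d q b - Tmap d q a = ∫ x in a..b, d x := by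
  simp only [Tmap, add_sub_add_left_eq_sub]
  rw [integral_interval_sub_left (hd.intervalIntegrable q b) (hd.intervalIntegrable q a)]

theorem Tmap_lb (hd : Continuous d) (hε : ∀ x, ε ≤ d x) {a b : ℝ} (hab : a ≤ b) :
    ε * (b - a) ≤ Tmap d q b - Tmap d q a := by
  rw [Tmap_sub hd]
  calc ε * (b - a) = ∫ _ in a..b, ε := by rw [intervalIntegral.integral_const, smul_eq_mul, mul_comm]
  _ ≤ ∫ x in a..b, d x :=
      integral_mono_on hab (intervalIntegrable_const) (hd.intervalIntegrable _ _)
        (fun x _ => hε x)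

theorem Tmap_surj (hd : Continuous d) (hε : ∀ x, ε ≤ d x) (hεp : 0 < ε) :
    Function.Surjective (Tmap d q) := by
  intro y
  set t : ℝ := (|y - q| + 1) / ε with ht
  have habs : (0:ℝ) ≤ |y - q| := abs_nonneg _
  have htpos : 0 < t := by positivity
  have h1 : ε * t = |y - q| + 1 := by
    rw [ht, mul_div_cancel₀ _ (ne_of_gt hεp)]
  have hub : y ≤ Tmap d q (q + t) := by
    have := Tmap_lb (q := q) hd hε (by linarith : q ≤ q + t)
    rw [Tmap_self] at this
    have h2 : y - q ≤ |y - q| := le_abs_self _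
    nlinarith
  have hlb : Tmap d q (q - t) ≤ y := by
    have := Tmap_lb (q := q) hd hε (by linarith : q - t ≤ q)
    rw [Tmap_self] at this
    have h2 : -(y - q) ≤ |y - q| := neg_le_abs _
    nlinarith
  have hmem : y ∈ Icc (Tmap d q (q - t)) (Tmap d q (q + t)) := ⟨hlb, hub⟩
  obtain ⟨x, _, hx⟩ := intermediate_value_Icc (f := Tmap d q)
    (by linarith : q - t ≤ q + t) (Tmap_cont hd).continuousOn hmem
  exact ⟨x, hx⟩

theorem phi_right (hd : Continuous d) (hε : ∀ x, ε ≤ d x) (hεp : 0 < ε) (y : ℝ) :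
    Tmap d q (phi d q y) = y :=
  Function.invFun_eq (Tmap_surj hd hε hεp y)

theorem phi_left (hd : Continuous d) (hε : ∀ x, ε ≤ d x) (hεp : 0 < ε) (b : ℝ) :
    phi d q (Tmap d q b) = b :=
  Function.leftInverse_invFun (Tmap_mono hd hε hεp).injective b

theorem phi_cont (hd : Continuous d) (hε : ∀ x, ε ≤ d x) (hεp : 0 < ε) :
    Continuous (phi d q) := by
  have hphi : phi d q = ⇑(StrictMono.orderIsoOfSurjective (Tmap d q) (Tmap_mono hd hε hεp)
      (Tmap_surj hd hε hεp)).symm := by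
    funext y
    apply (Tmap_mono (q := q) hd hε hεp).injective
    rw [phi_right hd hε hεp]
    exact (StrictMono.orderIsoOfSurjective_self_symm_apply (Tmap d q) (Tmap_mono hd hε hεp)
      (Tmap_surj hd hε hεp) y).symm
  rw [hphi]
  exact OrderIso.continuous _

theorem phi_hasDeriv (hd : Continuous d) (hε : ∀ x, ε ≤ d x) (hεp : 0 < ε) (y : ℝ) :
    HasDerivAt (phi d q) (d (phi d q y))⁻¹ y :=
  HasDerivAt.of_local_left_inverse ((phi_cont hd hε hεp).continuousAt)
    (Tmap_hasDeriv hd _) (ne_of_gt (lt_of_lt_of_le hεp (hε _)))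
    (Filter.Eventually.of_forall (phi_right hd hε hεp))

end HR
namespace HR
open MeasureTheory Set Filter Topology intervalIntegral

variable {f : ℝ → ℝ → ℝ → ℝ} {γ : ℝ → ℝ → ℝ} {d d' : ℝ → ℝ} {q ε M' M₂ : ℝ}

/-- transported density -/
noncomputable def trf (f : ℝ → ℝ → ℝ → ℝ) (d : ℝ → ℝ) (q : ℝ) : ℝ → ℝ → ℝ → ℝ :=
  fun x v r => f (phi d q x) v r * (d (phi d q x))⁻¹

noncomputable def psi (d : ℝ → ℝ) (q : ℝ) : ℝ → ℝ := fun y => (d (phi d q y))⁻¹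

noncomputable def psiD (d d' : ℝ → ℝ) (q : ℝ) : ℝ → ℝ := fun y =>
  -(d' (phi d q y) * (d (phi d q y))⁻¹) / d (phi d q y) ^ 2

theorem psi_hasDeriv (hd : Continuous d) (hε : ∀ x, ε ≤ d x) (hεp : 0 < ε)
    (hdd : ∀ x, HasDerivAt d (d' x) x) (y : ℝ) :
    HasDerivAt (psi d q) (psiD d d' q y) y := by
  have hcomp : HasDerivAt (fun y => d (phi d q y)) (d' (phi d q y) * (d (phi d q y))⁻¹) y :=
    (hdd (phi d q y)).comp y (phi_hasDeriv hd hε hεp y)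
  exact hcomp.inv (ne_of_gt (lt_of_lt_of_le hεp (hε _)))

theorem psi_pos (hε : ∀ x, ε ≤ d x) (hεp : 0 < ε) (y : ℝ) : 0 < psi d q y :=
  inv_pos.2 (lt_of_lt_of_le hεp (hε _))

theorem psi_le (hε : ∀ x, ε ≤ d x) (hεp : 0 < ε) (y : ℝ) : psi d q y ≤ ε⁻¹ :=
  inv_anti₀ hεp (hε _)

theorem psiD_le (hε : ∀ x, ε ≤ d x) (hεp : 0 < ε) (hd'M : ∀ x, |d' x| ≤ M₂) (y : ℝ) :
    |psiD d d' q y| ≤ M₂ * ε⁻¹ / ε ^ 2 := by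
  have hdpos : 0 < d (phi d q y) := lt_of_lt_of_le hεp (hε _)
  have hM2 : 0 ≤ M₂ := le_trans (abs_nonneg _) (hd'M 0)
  have hb : |(d (phi d q y))⁻¹| ≤ ε⁻¹ := by
    rw [abs_inv, abs_of_pos hdpos]; exact inv_anti₀ hεp (hε _)
  have hnum : |(-(d' (phi d q y) * (d (phi d q y))⁻¹))| ≤ M₂ * ε⁻¹ := by
    rw [abs_neg, abs_mul]
    exact mul_le_mul (hd'M _) hb (abs_nonneg _) hM2
  rw [psiD, abs_div, abs_of_pos (by positivity : (0:ℝ) < d (phi d q y) ^ 2)]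
  exact div_le_div₀ (by positivity) hnum (by positivity) (by nlinarith [hε (phi d q y)])

theorem psi_cont (hd : Continuous d) (hε : ∀ x, ε ≤ d x) (hεp : 0 < ε) :
    Continuous (psi d q) :=
  (hd.comp (phi_cont hd hε hεp)).inv₀ fun y => ne_of_gt (lt_of_lt_of_le hεp (hε _))

theorem psiD_cont (hd : Continuous d) (hd'c : Continuous d') (hε : ∀ x, ε ≤ d x) (hεp : 0 < ε) :
    Continuous (psiD d d' q) := by
  have h1 : Continuous fun y => d (phi d q y) := hd.comp (phi_cont hd hε hεp)
  have hne : ∀ y, d (phi d q y) ≠ 0 := fun y => ne_of_gt (lt_of_lt_of_le hεp (hε _))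
  exact (((hd'c.comp (phi_cont hd hε hεp)).mul (h1.inv₀ hne)).neg).div (h1.pow 2)
    fun y => by
      have := lt_of_lt_of_le hεp (hε (phi d q y)); positivity

theorem phi_contDiff (hd : Continuous d) (hε : ∀ x, ε ≤ d x) (hεp : 0 < ε) :
    ContDiff ℝ 1 (phi d q) := by
  rw [contDiff_one_iff_deriv]
  refine ⟨fun y => (phi_hasDeriv hd hε hεp y).differentiableAt, ?_⟩
  have : deriv (phi d q) = psi d q := funext fun y => (phi_hasDeriv hd hε hεp y).deriv
  rw [this]; exact psi_cont hd hε hεp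

theorem psi_contDiff (hd : Continuous d) (hd'c : Continuous d') (hε : ∀ x, ε ≤ d x) (hεp : 0 < ε)
    (hdd : ∀ x, HasDerivAt d (d' x) x) :
    ContDiff ℝ 1 (psi d q) := by
  rw [contDiff_one_iff_deriv]
  refine ⟨fun y => (psi_hasDeriv hd hε hεp hdd y).differentiableAt, ?_⟩
  have : deriv (psi d q) = psiD d d' q :=
    funext fun y => (psi_hasDeriv hd hε hεp hdd y).deriv
  rw [this]; exact psiD_cont hd hd'c hε hεp

theorem trf_memFgamma (hγ : MemL γ) (hf : MemFgamma f γ) (hd : Continuous d)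
    (hd'c : Continuous d') (hε : ∀ x, ε ≤ d x) (hεp : 0 < ε)
    (hdd : ∀ x, HasDerivAt d (d' x) x) (hd'M : ∀ x, |d' x| ≤ M₂) :
    MemFgamma (trf f d q) (fun v r => (ε⁻¹ + (ε⁻¹ * ε⁻¹ + M₂ * ε⁻¹ / ε ^ 2)) * γ v r) := by
  have hφc := phi_cont (q := q) hd hε hεp
  have hεinv : (0:ℝ) < ε⁻¹ := by positivity
  have hM2 : 0 ≤ M₂ := le_trans (abs_nonneg _) (hd'M 0)
  have hK2 : (0:ℝ) ≤ M₂ * ε⁻¹ / ε ^ 2 := by positivity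
  refine ⟨?_, ?_, ?_, ?_, ?_⟩
  · -- measurability
    exact (hf.1.comp (((hφc.measurable.comp measurable_fst).prodMk measurable_snd))).mul
      (((psi_cont (q := q) hd hε hεp).measurable).comp measurable_fst)
  · exact fun x v r => mul_nonneg (hf.2.1 _ _ _) (le_of_lt (psi_pos hε hεp x))
  · intro v r
    exact ((hf.2.2.1 v r).comp (phi_contDiff hd hε hεp)).mul
      (psi_contDiff hd hd'c hε hεp hdd)
  · intro x v r
    have h1 : f (phi d q x) v r * (d (phi d q x))⁻¹ ≤ γ v r * ε⁻¹ :=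
      mul_le_mul (hf.2.2.2.1 _ _ _) (psi_le hε hεp x) (le_of_lt (psi_pos hε hεp x))
        (le_trans (hf.2.1 (phi d q x) v r) (hf.2.2.2.1 _ _ _))
    have h2 : (0:ℝ) ≤ γ v r := le_trans (hf.2.1 0 v r) (hf.2.2.2.1 0 v r)
    calc trf f d q x v r ≤ γ v r * ε⁻¹ := h1
    _ ≤ (ε⁻¹ + (ε⁻¹ * ε⁻¹ + M₂ * ε⁻¹ / ε ^ 2)) * γ v r := by nlinarith
  · intro x v r
    have h2 : (0:ℝ) ≤ γ v r := le_trans (hf.2.1 0 v r) (hf.2.2.2.1 0 v r)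
    have hDf : HasDerivAt (fun x' => trf f d q x' v r)
        ((deriv (fun x' => f x' v r) (phi d q x) * psi d q x) * psi d q x
          + f (phi d q x) v r * psiD d d' q x) x := by
      have h1 : HasDerivAt (fun x' => f (phi d q x') v r)
          (deriv (fun x' => f x' v r) (phi d q x) * psi d q x) x :=
        ((((hf.2.2.1 v r).differentiable one_ne_zero) (phi d q x)).hasDerivAt).comp x
          (phi_hasDeriv hd hε hεp x)
      exact h1.mul (psi_hasDeriv hd hε hεp hdd x)
    rw [hDf.deriv]
    have e1 : |deriv (fun x' => f x' v r) (phi d q x)| ≤ γ v r := hf.2.2.2.2 _ _ _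
    have e2 : |psi d q x| ≤ ε⁻¹ := by
      rw [abs_of_pos (psi_pos hε hεp x)]; exact psi_le hε hεp x
    have e3 : |f (phi d q x) v r| ≤ γ v r := by
      rw [abs_of_nonneg (hf.2.1 _ _ _)]; exact hf.2.2.2.1 _ _ _
    calc |deriv (fun x' => f x' v r) (phi d q x) * psi d q x * psi d q x
          + f (phi d q x) v r * psiD d d' q x|
        ≤ |deriv (fun x' => f x' v r) (phi d q x) * psi d q x * psi d q x|
          + |f (phi d q x) v r * psiD d d' q x| := abs_add_le _ _
      _ ≤ γ v r * ε⁻¹ * ε⁻¹ + γ v r * (M₂ * ε⁻¹ / ε ^ 2) := by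
          rw [abs_mul, abs_mul, abs_mul]
          exact add_le_add
            (mul_le_mul (mul_le_mul e1 e2 (abs_nonneg _) h2) e2 (abs_nonneg _)
              (by positivity)) (mul_le_mul e3 (psiD_le hε hεp hd'M x) (abs_nonneg _) h2)
      _ ≤ (ε⁻¹ + (ε⁻¹ * ε⁻¹ + M₂ * ε⁻¹ / ε ^ 2)) * γ v r := by nlinarith

theorem trf_sigma (x : ℝ) :
    sigmaF (trf f d q) x = sigmaF f (phi d q x) * (d (phi d q x))⁻¹ := by
  unfold sigmaF trf
  rw [← MeasureTheory.integral_mul_const]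
  congr 1
  funext p
  ring

theorem memL_mul {C : ℝ} (hγ : MemL γ) (hC : 0 ≤ C) : MemL (fun v r => C * γ v r) := by
  refine ⟨fun v r => mul_nonneg hC (hγ.1 v r), ?_⟩
  have : (fun p : ℝ × ℝ => (p.1 ^ 2 + p.2 ^ 2 + 1) * (C * γ p.1 p.2))
      = fun p : ℝ × ℝ => C * ((p.1 ^ 2 + p.2 ^ 2 + 1) * γ p.1 p.2) := by
    funext p; ring
  rw [this]
  exact hγ.2.const_mul C

end HR
namespace HR
open MeasureTheory Set Filter Topology intervalIntegral

variable {f : ℝ → ℝ → ℝ → ℝ} {γ : ℝ → ℝ → ℝ} {d : ℝ → ℝ} {q ε : ℝ}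

theorem cov_int (hd : Continuous d) (hε : ∀ x, ε ≤ d x) (hεp : 0 < ε)
    (hs : Continuous (sigmaF f)) (y : ℝ) :
    ∫ t in q..y, sigmaF (trf f d q) t = ∫ x in q..(phi d q y), sigmaF f x := by
  have hφc := phi_cont (q := q) hd hε hεp
  have hG : Continuous fun t => sigmaF f (phi d q t) * (d (phi d q t))⁻¹ :=
    (hs.comp hφc).mul (psi_cont hd hε hεp)
  have h1 : (fun t => sigmaF (trf f d q) t)
      = fun t => sigmaF f (phi d q t) * (d (phi d q t))⁻¹ := funext fun t => trf_sigma t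
  have key := integral_comp_smul_deriv (a := q) (b := phi d q y) (f := Tmap d q) (f' := d)
    (g := fun t => sigmaF f (phi d q t) * (d (phi d q t))⁻¹)
    (fun x _ => Tmap_hasDeriv hd x) hd.continuousOn hG
  rw [Tmap_self, phi_right hd hε hεp] at key
  rw [h1, ← key]
  apply integral_congr
  intro x _
  have hne : d x ≠ 0 := ne_of_gt (lt_of_lt_of_le hεp (hε x))
  simp only [Function.comp, phi_left hd hε hεp, smul_eq_mul]
  rw [mul_comm (sigmaF f x), ← mul_assoc, mul_inv_cancel₀ hne, one_mul]

theorem invFun_phi (hd : Continuous d) (hε : ∀ x, ε ≤ d x) (hεp : 0 < ε) (x : ℝ) :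
    Function.invFun (phi d q) x = Tmap d q x := by
  have hinj : Function.Injective (phi d q) := fun a b hab => by
    rw [← phi_right hd hε hεp a, ← phi_right hd hε hεp b, hab]
  calc Function.invFun (phi d q) x
      = Function.invFun (phi d q) (phi d q (Tmap d q x)) := by rw [phi_left hd hε hεp]
    _ = Tmap d q x := Function.leftInverse_invFun hinj _

/-! D-side -/

noncomputable def dD (f : ℝ → ℝ → ℝ → ℝ) : ℝ → ℝ := fun x => 1 + sigmaF f x

theorem dD_cont (hγ : MemL γ) (hf : MemFgamma f γ) : Continuous (dD f) :=
  continuous_const.add (sig_cont hγ hf)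

theorem dD_hasDeriv (hγ : MemL γ) (hf : MemFgamma f γ) (x : ℝ) :
    HasDerivAt (dD f) (sigD f x) x := (sig_hasDeriv hγ hf x).const_add 1

theorem dD_ge (hpos : ∀ x, 0 < sigmaF f x) (x : ℝ) : 1 ≤ dD f x := by
  have := hpos x; unfold dD; linarith

theorem Dfun_eq (hγ : MemL γ) (hf : MemFgamma f γ) : Dfun f q = Tmap (dD f) q := by
  funext b
  unfold Dfun Tmap dD
  rw [integral_add (intervalIntegrable_const) ((sig_cont hγ hf).intervalIntegrable _ _),
    intervalIntegral.integral_const]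
  simp
  ring

theorem Dop_eq (hγ : MemL γ) (hf : MemFgamma f γ) : Dop f q = trf f (dD f) q := by
  funext y v r
  unfold Dop trf phi
  rw [Dfun_eq (q := q) hγ hf, div_eq_mul_inv]
  rfl

/-! C-side -/

noncomputable def dC (g : ℝ → ℝ → ℝ → ℝ) : ℝ → ℝ := fun x => 1 - sigmaF g x

theorem dC_cont (hγ : MemL γ) (hf : MemFgamma f γ) : Continuous (dC f) :=
  continuous_const.sub (sig_cont hγ hf)

theorem dC_hasDeriv (hγ : MemL γ) (hf : MemFgamma f γ) (x : ℝ) :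
    HasDerivAt (dC f) (-sigD f x) x := (sig_hasDeriv hγ hf x).const_sub 1

theorem dC_ge {c : ℝ} (hc : ∀ x, sigmaF f x ≤ c) (x : ℝ) : 1 - c ≤ dC f x := by
  have := hc x; unfold dC; linarith

theorem Cfun_eq (hγ : MemL γ) (hf : MemFgamma f γ) : Cfun f q = Tmap (dC f) q := by
  funext b
  unfold Cfun Tmap dC
  rw [integral_sub (intervalIntegrable_const) ((sig_cont hγ hf).intervalIntegrable _ _),
    intervalIntegral.integral_const]
  simp
  ring

theorem Cop_eq (hγ : MemL γ) (hf : MemFgamma f γ) : Cop f q = trf f (dC f) q := by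
  funext y v r
  unfold Cop trf phi
  rw [Cfun_eq (q := q) hγ hf, div_eq_mul_inv]
  rfl

end HR
namespace HR
open MeasureTheory Set Filter Topology intervalIntegral

variable {f g : ℝ → ℝ → ℝ → ℝ} {γ : ℝ → ℝ → ℝ} {q : ℝ}

theorem memG_Dop (hF : MemF f) : MemG (Dop f q) := by
  obtain ⟨⟨γ, hγ, hf⟩, hpos⟩ := hF
  have hM : 0 ≤ Mc γ := Mc_nonneg hγ
  have hd := dD_cont hγ hf
  have hε := dD_ge (f := f) hpos
  have hσle : ∀ x, sigmaF f x ≤ Mc γ := fun x => le_trans (le_abs_self _) (sig_abs_le hγ hf x)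
  refine ⟨⟨⟨fun v r => ((1:ℝ)⁻¹ + ((1:ℝ)⁻¹ * (1:ℝ)⁻¹ + Mc γ * (1:ℝ)⁻¹ / (1:ℝ) ^ 2)) * γ v r,
    memL_mul hγ (by positivity), ?_⟩, ?_⟩, Mc γ / (1 + Mc γ), ?_, ?_⟩
  · rw [Dop_eq hγ hf]
    exact trf_memFgamma hγ hf hd (sigD_cont hγ hf) hε one_pos (dD_hasDeriv hγ hf)
      (sigD_abs_le hγ hf)
  · intro x
    rw [Dop_eq hγ hf, trf_sigma]
    exact mul_pos (hpos _) (inv_pos.2 (lt_of_lt_of_le one_pos (hε _)))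
  · rw [div_lt_one (by linarith)]; linarith
  · intro y
    rw [Dop_eq hγ hf, trf_sigma]
    have hs0 : 0 < sigmaF f (phi (dD f) q y) := hpos _
    have hsM : sigmaF f (phi (dD f) q y) ≤ Mc γ := hσle _
    have hdd : dD f (phi (dD f) q y) = 1 + sigmaF f (phi (dD f) q y) := rfl
    rw [hdd, ← div_eq_mul_inv, div_le_div_iff₀ (by linarith) (by linarith)]
    nlinarith

theorem memF_Cop (hG : MemG g) : MemF (Cop g q) := by
  obtain ⟨⟨⟨γ, hγ, hg⟩, hpos⟩, c, hc1, hcle⟩ := hG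
  have hεp : (0:ℝ) < 1 - c := by linarith
  have hM : 0 ≤ Mc γ := Mc_nonneg hγ
  have hd := dC_cont hγ hg
  have hε := dC_ge (f := g) hcle
  have hC : (0:ℝ) ≤ (1 - c)⁻¹ + ((1 - c)⁻¹ * (1 - c)⁻¹ + Mc γ * (1 - c)⁻¹ / (1 - c) ^ 2) := by
    have h1 : (0:ℝ) < (1 - c)⁻¹ := inv_pos.2 hεp
    have h2 : (0:ℝ) ≤ Mc γ * (1 - c)⁻¹ / (1 - c) ^ 2 :=
      div_nonneg (mul_nonneg hM h1.le) (by positivity)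
    nlinarith
  refine ⟨⟨fun v r => ((1 - c)⁻¹ + ((1 - c)⁻¹ * (1 - c)⁻¹ + Mc γ * (1 - c)⁻¹ / (1 - c) ^ 2)) * γ v r,
    memL_mul hγ hC, ?_⟩, ?_⟩
  · rw [Cop_eq hγ hg]
    exact trf_memFgamma hγ hg hd ((sigD_cont hγ hg).neg) hε hεp (dC_hasDeriv hγ hg)
      (fun x => by rw [Pi.neg_apply, abs_neg]; exact sigD_abs_le hγ hg x)
  · intro x
    rw [Cop_eq hγ hg, trf_sigma]
    exact mul_pos (hpos _) (inv_pos.2 (lt_of_lt_of_le hεp (hε _)))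

theorem CopDop (hF : MemF f) (x v r : ℝ) : Cop (Dop f q) q x v r = f x v r := by
  obtain ⟨⟨γ, hγ, hf⟩, hpos⟩ := hF
  have hd := dD_cont hγ hf
  have hε := dD_ge (f := f) hpos
  have step1 : Cfun (Dop f q) q = phi (dD f) q := by
    funext y
    unfold Cfun
    rw [Dop_eq hγ hf, cov_int hd hε one_pos (sig_cont hγ hf) y]
    have h2 := phi_right (q := q) hd hε one_pos y
    rw [← Dfun_eq hγ hf] at h2
    unfold Dfun at h2
    linarith
  show Dop f q (Function.invFun (Cfun (Dop f q) q) x) v r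
      / (1 - sigmaF (Dop f q) (Function.invFun (Cfun (Dop f q) q) x)) = f x v r
  rw [step1, invFun_phi hd hε one_pos, Dop_eq hγ hf, trf_sigma]
  show trf f (dD f) q (Tmap (dD f) q x) v r
      / (1 - sigmaF f (phi (dD f) q (Tmap (dD f) q x))
        * (dD f (phi (dD f) q (Tmap (dD f) q x)))⁻¹) = f x v r
  unfold trf
  rw [phi_left hd hε one_pos]
  have hs0 : 0 < sigmaF f x := hpos x
  have hdd : dD f x = 1 + sigmaF f x := rfl
  rw [hdd]
  have h3 : (1:ℝ) - sigmaF f x * (1 + sigmaF f x)⁻¹ = (1 + sigmaF f x)⁻¹ := by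
    field_simp
    ring
  rw [h3, div_eq_mul_inv, inv_inv, mul_assoc,
    inv_mul_cancel₀ (by positivity : (1 + sigmaF f x) ≠ 0), mul_one]

theorem DopCop (hG : MemG g) (y v r : ℝ) : Dop (Cop g q) q y v r = g y v r := by
  obtain ⟨⟨⟨γ, hγ, hg⟩, hpos⟩, c, hc1, hcle⟩ := hG
  have hεp : (0:ℝ) < 1 - c := by linarith
  have hd := dC_cont hγ hg
  have hε := dC_ge (f := g) hcle
  have step1 : Dfun (Cop g q) q = phi (dC g) q := by
    funext z
    unfold Dfun
    rw [Cop_eq hγ hg, cov_int hd hε hεp (sig_cont hγ hg) z]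
    have h2 := phi_right (q := q) hd hε hεp z
    rw [← Cfun_eq hγ hg] at h2
    unfold Cfun at h2
    linarith
  show Cop g q (Function.invFun (Dfun (Cop g q) q) y) v r
      / (1 + sigmaF (Cop g q) (Function.invFun (Dfun (Cop g q) q) y)) = g y v r
  rw [step1, invFun_phi hd hε hεp, Cop_eq hγ hg, trf_sigma]
  show trf g (dC g) q (Tmap (dC g) q y) v r
      / (1 + sigmaF g (phi (dC g) q (Tmap (dC g) q y))
        * (dC g (phi (dC g) q (Tmap (dC g) q y)))⁻¹) = g y v r
  unfold trf
  rw [phi_left hd hε hεp]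
  have hs1 : sigmaF g y < 1 := lt_of_le_of_lt (hcle y) hc1
  have hdd : dC g y = 1 - sigmaF g y := rfl
  rw [hdd]
  have hne : (1:ℝ) - sigmaF g y ≠ 0 := by linarith
  have h3 : (1:ℝ) + sigmaF g y * (1 - sigmaF g y)⁻¹ = (1 - sigmaF g y)⁻¹ := by
    field_simp
    ring
  rw [h3, div_eq_mul_inv, inv_inv, mul_assoc, inv_mul_cancel₀ hne, mul_one]

end HR


/-- The operators `𝒟_q : 𝓕 → 𝓖` and `𝒞_q : 𝓖 → 𝓕` are mutually inverse bijections: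
`𝒞_q ∘ 𝒟_q = id` on `𝓕` and `𝒟_q ∘ 𝒞_q = id` on `𝓖`. -/
theorem stmt8 (q : ℝ) :
    (∀ f, MemF f → MemG (Dop f q)) ∧
    (∀ g, MemG g → MemF (Cop g q)) ∧
    (∀ f, MemF f → ∀ x v r : ℝ, Cop (Dop f q) q x v r = f x v r) ∧
    (∀ g, MemG g → ∀ y v r : ℝ, Dop (Cop g q) q y v r = g y v r) :=

  ⟨fun _ hF => HR.memG_Dop hF, fun _ hG => HR.memF_Cop hG,
    fun _ hF x v r => HR.CopDop hF x v r, fun _ hG y v r => HR.DopCop hG y v r⟩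
end

section
/- Dilation and contraction conserve mass: for f ∈ 𝓕, g := 𝒟_a f, and any a, b, c ∈ ℝ, ∫_{D_{f,a}(b)}^{D_{f,a}(c)} σ_g(y) dy = ∫_b^c σ_f(x) dx. -/
open MeasureTheory Filter Topology

/-- Dilation conserves mass: for `f ∈ 𝓕` and `g = 𝒟_a f`,
`∫_{D_{f,a}(b)}^{D_{f,a}(c)} σ_g(y) dy = ∫_b^c σ_f(x) dx`. -/
theorem stmt9 (f : ℝ → ℝ → ℝ → ℝ) (hf : MemF f) (a b c : ℝ) :
    ∫ y in (Dfun f a b)..(Dfun f a c), sigmaF (Dop f a) y = ∫ x in b..c, sigmaF f x := by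
  obtain ⟨⟨γ, ⟨hγ0, hγint⟩, hmeas, hf0, hC1, hdom, _⟩, hσpos⟩ := hf
  -- the dominating bound is integrable
  have hbound : Integrable (fun p : ℝ × ℝ => |p.2| * γ p.1 p.2) := by
    have hne : ∀ p : ℝ × ℝ, p.1 ^ 2 + p.2 ^ 2 + 1 ≠ 0 := fun p => by positivity
    have hms : AEStronglyMeasurable (fun p : ℝ × ℝ => |p.2| * γ p.1 p.2) volume := by
      have h1 := hγint.aestronglyMeasurable
      have heq : (fun p : ℝ × ℝ => |p.2| * γ p.1 p.2)
          = fun p : ℝ × ℝ => (|p.2| / (p.1 ^ 2 + p.2 ^ 2 + 1)) *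
              ((p.1 ^ 2 + p.2 ^ 2 + 1) * γ p.1 p.2) := by
        funext p
        field_simp
      rw [heq]
      exact (((continuous_snd.abs).div
        (((continuous_fst.pow 2).add (continuous_snd.pow 2)).add continuous_const)
        hne).aestronglyMeasurable).mul h1
    refine hγint.mono hms ?_
    filter_upwards with p
    have h1 : |p.2| ≤ p.1 ^ 2 + p.2 ^ 2 + 1 := by
      nlinarith [sq_nonneg (|p.2| - 1), sq_abs p.2, sq_nonneg p.1]
    have h2 : 0 ≤ γ p.1 p.2 := hγ0 p.1 p.2
    rw [Real.norm_eq_abs, Real.norm_eq_abs, abs_of_nonneg (mul_nonneg (abs_nonneg _) h2),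
      abs_of_nonneg (mul_nonneg (by positivity) h2)]
    exact mul_le_mul_of_nonneg_right h1 h2
  -- continuity of the mass function
  have hσcont : Continuous (sigmaF f) := by
    apply MeasureTheory.continuous_of_dominated (bound := fun p : ℝ × ℝ => |p.2| * γ p.1 p.2)
    · intro x
      have : Measurable fun p : ℝ × ℝ => f x p.1 p.2 :=
        hmeas.comp (measurable_const.prodMk measurable_id)
      exact (measurable_snd.mul this).aestronglyMeasurable
    · intro x
      filter_upwards with p
      rw [Real.norm_eq_abs, abs_mul, abs_of_nonneg (hf0 x p.1 p.2)]
      exact mul_le_mul_of_nonneg_left (hdom x p.1 p.2) (abs_nonneg _)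
    · exact hbound
    · filter_upwards with p
      exact continuous_const.mul (hC1 p.1 p.2).continuous
  -- derivative of the dilation function
  have hD : ∀ x : ℝ, HasDerivAt (Dfun f a) (1 + sigmaF f x) x := by
    intro x
    have h1 : HasDerivAt (fun u => ∫ t in a..u, sigmaF f t) (sigmaF f x) x :=
      intervalIntegral.integral_hasDerivAt_right (hσcont.intervalIntegrable a x)
        hσcont.stronglyMeasurable.stronglyMeasurableAtFilter hσcont.continuousAt
    exact (hasDerivAt_id x).add h1
  have hmono : StrictMono (Dfun f a) := by
    apply strictMono_of_deriv_pos
    intro x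
    rw [(hD x).deriv]
    linarith [hσpos x]
  have hDcont : Continuous (Dfun f a) :=
    continuous_iff_continuousAt.2 fun x => (hD x).continuousAt
  have hDa : Dfun f a a = a := by simp [Dfun]
  -- surjectivity of the dilation
  have hsurj : Function.Surjective (Dfun f a) := by
    intro y
    rcases le_total a y with hay | hya
    · have h1 : y ≤ Dfun f a y := by
        have : (0:ℝ) ≤ ∫ t in a..y, sigmaF f t :=
          intervalIntegral.integral_nonneg hay fun t _ => (hσpos t).le
        simp only [Dfun]; linarith
      have := intermediate_value_Icc hay hDcont.continuousOn
      have hy : y ∈ Set.Icc (Dfun f a a) (Dfun f a y) := ⟨by rw [hDa]; exact hay, h1⟩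
      obtain ⟨x, _, hx⟩ := this hy
      exact ⟨x, hx⟩
    · have h1 : Dfun f a y ≤ y := by
        have : (0:ℝ) ≤ ∫ t in y..a, sigmaF f t :=
          intervalIntegral.integral_nonneg hya fun t _ => (hσpos t).le
        have h2 : (∫ t in a..y, sigmaF f t) = -∫ t in y..a, sigmaF f t :=
          (intervalIntegral.integral_symm y a)
        simp only [Dfun]; rw [h2]; linarith
      have := intermediate_value_Icc hya hDcont.continuousOn
      have hy : y ∈ Set.Icc (Dfun f a y) (Dfun f a a) := ⟨h1, by rw [hDa]; exact hya⟩
      obtain ⟨x, _, hx⟩ := this hy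
      exact ⟨x, hx⟩
  -- the inverse is continuous
  set e : ℝ ≃o ℝ := StrictMono.orderIsoOfSurjective _ hmono hsurj with he
  have hinv_eq : Function.invFun (Dfun f a) = ⇑e.symm := by
    funext y
    apply hmono.injective
    rw [Function.invFun_eq (hsurj y)]
    have : (Dfun f a) (e.symm y) = e (e.symm y) := rfl
    rw [this, e.apply_symm_apply]
  have hinvcont : Continuous (Function.invFun (Dfun f a)) := by
    rw [hinv_eq]
    exact e.symm.continuous
  have hleft : ∀ x : ℝ, Function.invFun (Dfun f a) (Dfun f a x) = x :=
    Function.leftInverse_invFun hmono.injective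
  -- identify the mass function of the dilated density
  have key : ∀ y : ℝ, sigmaF (Dop f a) y =
      sigmaF f (Function.invFun (Dfun f a) y) /
        (1 + sigmaF f (Function.invFun (Dfun f a) y)) := by
    intro y
    simp only [sigmaF, Dop]
    rw [← integral_div]
    congr 1
    funext p
    ring
  set σ' : ℝ → ℝ := fun y => sigmaF f (Function.invFun (Dfun f a) y) /
      (1 + sigmaF f (Function.invFun (Dfun f a) y)) with hσ'
  have hσ'cont : Continuous σ' := by
    apply (hσcont.comp hinvcont).div (continuous_const.add (hσcont.comp hinvcont))
    intro y
    have := hσpos (Function.invFun (Dfun f a) y)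
    simp only [Pi.add_apply, Function.comp_apply]
    intro h
    linarith
  have hcv : (∫ x in b..c, (1 + sigmaF f x) • (σ' ∘ (Dfun f a)) x)
      = ∫ y in (Dfun f a b)..(Dfun f a c), σ' y :=
    intervalIntegral.integral_comp_smul_deriv (fun x _ => hD x)
      ((continuous_const.add hσcont).continuousOn) hσ'cont
  calc ∫ y in (Dfun f a b)..(Dfun f a c), sigmaF (Dop f a) y
      = ∫ y in (Dfun f a b)..(Dfun f a c), σ' y := by
        apply intervalIntegral.integral_congr
        intro y _
        exact key y
    _ = ∫ x in b..c, (1 + sigmaF f x) • (σ' ∘ (Dfun f a)) x := hcv.symm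
    _ = ∫ x in b..c, sigmaF f x := by
        apply intervalIntegral.integral_congr
        intro x _
        simp only [Function.comp, hσ', hleft x, smul_eq_mul]
        have h1 : (0:ℝ) < 1 + sigmaF f x := by linarith [hσpos x]
        field_simp
end

section
/- Flow difference identity: for f ∈ 𝓕 and p, v, w, t ∈ ℝ, j_f(p,v,t) − j_f(p,w,t) = ∫_{p+wt}^{p+vt} σ_{𝒯_t f}(x) dx, where 𝒯_t f(x,v,r) := f(x−vt,v,r) is the free (ideal gas) evolution. -/
open MeasureTheory Filter Topology

namespace Stmt13Aux

noncomputable def Kf (f : ℝ → ℝ → ℝ → ℝ) (z u : ℝ) : ℝ := ∫ r : ℝ, r * f z u r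

noncomputable def Ng (γ : ℝ → ℝ → ℝ) (u : ℝ) : ℝ := ∫ r : ℝ, |r| * γ u r

lemma hprod : (volume : Measure (ℝ × ℝ)) = (volume : Measure ℝ).prod volume :=
  Measure.volume_eq_prod ℝ ℝ

variable {f : ℝ → ℝ → ℝ → ℝ} {γ : ℝ → ℝ → ℝ}

lemma ratio_aesm (hγint : Integrable fun p : ℝ × ℝ => (p.1 ^ 2 + p.2 ^ 2 + 1) * γ p.1 p.2)
    (c : ℝ × ℝ → ℝ) (hc : Measurable c) :
    AEStronglyMeasurable (fun q : ℝ × ℝ => c q * γ q.1 q.2) volume := by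
  have h : (fun q : ℝ × ℝ => c q * γ q.1 q.2)
      = fun q => (c q / (q.1 ^ 2 + q.2 ^ 2 + 1)) * ((q.1 ^ 2 + q.2 ^ 2 + 1) * γ q.1 q.2) := by
    funext q
    have hne : (q.1 ^ 2 + q.2 ^ 2 + 1) ≠ 0 := by positivity
    field_simp
  rw [h]
  exact ((hc.div (by measurability)).aestronglyMeasurable).mul hγint.aestronglyMeasurable

lemma hg1 (hγ0 : ∀ v r : ℝ, 0 ≤ γ v r)
    (hγint : Integrable fun p : ℝ × ℝ => (p.1 ^ 2 + p.2 ^ 2 + 1) * γ p.1 p.2) :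
    Integrable fun q : ℝ × ℝ => |q.2| * γ q.1 q.2 := by
  refine hγint.mono' (ratio_aesm hγint _ (by measurability)) (ae_of_all _ fun q => ?_)
  have h0 := hγ0 q.1 q.2
  rw [Real.norm_eq_abs, abs_of_nonneg (by positivity)]
  have h1 : |q.2| ≤ q.1 ^ 2 + q.2 ^ 2 + 1 := by
    nlinarith [sq_nonneg (|q.2| - 1), sq_abs q.2, sq_nonneg q.1]
  exact mul_le_mul_of_nonneg_right h1 h0

lemma hg2 (hγ0 : ∀ v r : ℝ, 0 ≤ γ v r)
    (hγint : Integrable fun p : ℝ × ℝ => (p.1 ^ 2 + p.2 ^ 2 + 1) * γ p.1 p.2) :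
    Integrable fun q : ℝ × ℝ => |q.1| * |q.2| * γ q.1 q.2 := by
  refine hγint.mono' (ratio_aesm hγint _ (by measurability)) (ae_of_all _ fun q => ?_)
  have h0 := hγ0 q.1 q.2
  rw [Real.norm_eq_abs, abs_of_nonneg (by positivity)]
  have h1 : |q.1| * |q.2| ≤ q.1 ^ 2 + q.2 ^ 2 + 1 := by
    nlinarith [sq_nonneg (|q.1| - |q.2|), sq_abs q.1, sq_abs q.2]
  exact mul_le_mul_of_nonneg_right h1 h0

lemma hNint (hγ0 : ∀ v r : ℝ, 0 ≤ γ v r)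
    (hγint : Integrable fun p : ℝ × ℝ => (p.1 ^ 2 + p.2 ^ 2 + 1) * γ p.1 p.2) :
    Integrable (Ng γ) :=
  (hprod ▸ hg1 hγ0 hγint).integral_prod_left

lemma hN0 (hγ0 : ∀ v r : ℝ, 0 ≤ γ v r) (u : ℝ) : 0 ≤ Ng γ u :=
  integral_nonneg fun r => mul_nonneg (abs_nonneg r) (hγ0 u r)

lemma hNabs (hγ0 : ∀ v r : ℝ, 0 ≤ γ v r)
    (hγint : Integrable fun p : ℝ × ℝ => (p.1 ^ 2 + p.2 ^ 2 + 1) * γ p.1 p.2) :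
    Integrable fun u => |u| * Ng γ u := by
  have h2 : Integrable (fun q : ℝ × ℝ => |q.1| * (|q.2| * γ q.1 q.2)) (volume.prod volume) := by
    have he : (fun q : ℝ × ℝ => |q.1| * (|q.2| * γ q.1 q.2))
        = fun q : ℝ × ℝ => |q.1| * |q.2| * γ q.1 q.2 := by funext q; ring
    rw [he, ← hprod]; exact hg2 hγ0 hγint
  have h := h2.integral_prod_left
  have he : (fun u : ℝ => |u| * Ng γ u) = fun u : ℝ => ∫ r : ℝ, |u| * (|r| * γ u r) := by
    funext u; rw [integral_const_mul]; rfl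
  rw [he]; exact h

lemma hgood2 (hγ0 : ∀ v r : ℝ, 0 ≤ γ v r)
    (hγint : Integrable fun p : ℝ × ℝ => (p.1 ^ 2 + p.2 ^ 2 + 1) * γ p.1 p.2) :
    ∀ᵐ u : ℝ, Integrable fun r => |r| * γ u r := by
  have h := (hprod ▸ hγint).prod_right_ae
  filter_upwards [h] with u hu
  refine hu.mono' ?_ (ae_of_all _ fun r => ?_)
  · have he : (fun r : ℝ => |r| * γ u r)
        = fun r => (|r| / (u ^ 2 + r ^ 2 + 1)) * ((u ^ 2 + r ^ 2 + 1) * γ u r) := by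
      funext r
      have hne : (u ^ 2 + r ^ 2 + 1) ≠ 0 := by positivity
      field_simp
    rw [he]
    exact (Measurable.aestronglyMeasurable (by measurability)).mul hu.aestronglyMeasurable
  · rw [Real.norm_eq_abs, abs_of_nonneg (mul_nonneg (abs_nonneg r) (hγ0 u r))]
    refine mul_le_mul_of_nonneg_right ?_ (hγ0 u r)
    nlinarith [sq_nonneg (|r| - 1), sq_abs r, sq_nonneg u]

lemma hKm (hfm : Measurable fun p : ℝ × ℝ × ℝ => f p.1 p.2.1 p.2.2) :
    StronglyMeasurable fun q : ℝ × ℝ => Kf f q.1 q.2 := by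
  have hm : Measurable fun q : (ℝ × ℝ) × ℝ => q.2 * f q.1.1 q.1.2 q.2 :=
    measurable_snd.mul
      (hfm.comp ((measurable_fst.fst).prodMk ((measurable_fst.snd).prodMk measurable_snd)))
  exact hm.stronglyMeasurable.integral_prod_right'

lemma hsec (hfm : Measurable fun p : ℝ × ℝ × ℝ => f p.1 p.2.1 p.2.2) (z u : ℝ) :
    Measurable fun r : ℝ => r * f z u r :=
  measurable_id.mul (hfm.comp (measurable_const.prodMk (measurable_const.prodMk measurable_id)))

lemma hKint (hfm : Measurable fun p : ℝ × ℝ × ℝ => f p.1 p.2.1 p.2.2)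
    (hf0 : ∀ x v r : ℝ, 0 ≤ f x v r) (hfle : ∀ x v r : ℝ, f x v r ≤ γ v r)
    {u : ℝ} (hu : Integrable fun r => |r| * γ u r) (z : ℝ) :
    Integrable fun r => r * f z u r := by
  refine hu.mono' (hsec hfm z u).aestronglyMeasurable (ae_of_all _ fun r => ?_)
  rw [Real.norm_eq_abs, abs_mul, abs_of_nonneg (hf0 z u r)]
  exact mul_le_mul_of_nonneg_left (hfle z u r) (abs_nonneg r)

lemma hKle (hfm : Measurable fun p : ℝ × ℝ × ℝ => f p.1 p.2.1 p.2.2)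
    (hf0 : ∀ x v r : ℝ, 0 ≤ f x v r) (hfle : ∀ x v r : ℝ, f x v r ≤ γ v r)
    {u : ℝ} (hu : Integrable fun r => |r| * γ u r) (z : ℝ) :
    |Kf f z u| ≤ Ng γ u := by
  calc |Kf f z u| ≤ ∫ r : ℝ, |r * f z u r| := by
        simpa only [Kf, Real.norm_eq_abs] using
          norm_integral_le_integral_norm (μ := volume) fun r => r * f z u r
    _ ≤ Ng γ u := by
        refine integral_mono (hKint hfm hf0 hfle hu z).abs hu fun r => ?_
        rw [abs_mul, abs_of_nonneg (hf0 z u r)]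
        exact mul_le_mul_of_nonneg_left (hfle z u r) (abs_nonneg r)

lemma hKzm (hfm : Measurable fun p : ℝ × ℝ × ℝ => f p.1 p.2.1 p.2.2) (u : ℝ) :
    StronglyMeasurable fun z => Kf f z u :=
  (hKm hfm).comp_measurable (measurable_id.prodMk measurable_const)

lemma hKII (hfm : Measurable fun p : ℝ × ℝ × ℝ => f p.1 p.2.1 p.2.2)
    (hf0 : ∀ x v r : ℝ, 0 ≤ f x v r) (hfle : ∀ x v r : ℝ, f x v r ≤ γ v r)
    {u : ℝ} (hu : Integrable fun r => |r| * γ u r) (c d : ℝ) :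
    IntervalIntegrable (fun z => Kf f z u) volume c d := by
  refine IntervalIntegrable.mono_fun' (g := fun _ => Ng γ u) intervalIntegrable_const
    ((hKzm hfm u).aestronglyMeasurable.restrict) (ae_of_all _ fun z => ?_)
  show ‖Kf f z u‖ ≤ Ng γ u
  rw [Real.norm_eq_abs]
  exact hKle hfm hf0 hfle hu z

lemma haux (hfm : Measurable fun p : ℝ × ℝ × ℝ => f p.1 p.2.1 p.2.2)
    (e₁ e₂ : ℝ → ℝ) (h₁ : Measurable e₁) (h₂ : Measurable e₂) :
    StronglyMeasurable fun u => ∫ z in Set.Ioc (e₁ u) (e₂ u), Kf f z u := by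
  have hs : MeasurableSet {q : ℝ × ℝ | e₁ q.1 < q.2 ∧ q.2 ≤ e₂ q.1} :=
    (measurableSet_lt (h₁.comp measurable_fst) measurable_snd).inter
      (measurableSet_le measurable_snd (h₂.comp measurable_fst))
  have hF : StronglyMeasurable fun q : ℝ × ℝ =>
      Set.indicator {q : ℝ × ℝ | e₁ q.1 < q.2 ∧ q.2 ≤ e₂ q.1} (fun q => Kf f q.2 q.1) q :=
    ((hKm hfm).comp_measurable measurable_swap).indicator hs
  have h := hF.integral_prod_right' (ν := volume)
  have he : (fun u => ∫ z in Set.Ioc (e₁ u) (e₂ u), Kf f z u)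
      = fun u => ∫ z : ℝ, Set.indicator {q : ℝ × ℝ | e₁ q.1 < q.2 ∧ q.2 ≤ e₂ q.1}
          (fun q => Kf f q.2 q.1) (u, z) := by
    funext u
    rw [← integral_indicator (μ := volume) (f := fun z => Kf f z u) measurableSet_Ioc]
    congr 1
  rw [he]
  exact h

lemma hGm (hfm : Measurable fun p : ℝ × ℝ × ℝ => f p.1 p.2.1 p.2.2) (p t v' : ℝ) :
    StronglyMeasurable fun u => ∫ z in p..(p + (v' - u) * t), Kf f z u := by
  have hme : Measurable fun u : ℝ => p + (v' - u) * t :=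
    measurable_const.add ((measurable_const.sub measurable_id).mul measurable_const)
  have h1 := haux (f := f) hfm (fun _ => p) (fun u => p + (v' - u) * t) measurable_const hme
  have h2 := haux (f := f) hfm (fun u => p + (v' - u) * t) (fun _ => p) hme measurable_const
  have he : (fun u => ∫ z in p..(p + (v' - u) * t), Kf f z u)
      = fun u => (∫ z in Set.Ioc p (p + (v' - u) * t), Kf f z u)
          - ∫ z in Set.Ioc (p + (v' - u) * t) p, Kf f z u := by
    funext u; rfl
  rw [he]
  exact h1.sub h2

lemma hGint (hγ0 : ∀ v r : ℝ, 0 ≤ γ v r)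
    (hγint : Integrable fun p : ℝ × ℝ => (p.1 ^ 2 + p.2 ^ 2 + 1) * γ p.1 p.2)
    (hfm : Measurable fun p : ℝ × ℝ × ℝ => f p.1 p.2.1 p.2.2)
    (hf0 : ∀ x v r : ℝ, 0 ≤ f x v r) (hfle : ∀ x v r : ℝ, f x v r ≤ γ v r)
    (p t v' : ℝ) :
    Integrable fun u => ∫ z in p..(p + (v' - u) * t), Kf f z u := by
  refine Integrable.mono' (g := fun u => |v'| * |t| * Ng γ u + |t| * (|u| * Ng γ u))
    (((hNint hγ0 hγint).const_mul _).add ((hNabs hγ0 hγint).const_mul _))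
    (hGm hfm p t v').aestronglyMeasurable ?_
  filter_upwards [hgood2 hγ0 hγint] with u hu
  have hb := intervalIntegral.norm_integral_le_of_norm_le_const (a := p)
    (b := p + (v' - u) * t) (C := Ng γ u) (f := fun z => Kf f z u)
    (fun z _ => by rw [Real.norm_eq_abs]; exact hKle hfm hf0 hfle hu z)
  rw [Real.norm_eq_abs] at hb ⊢
  refine le_trans hb ?_
  have h1 : |p + (v' - u) * t - p| = |v' - u| * |t| := by
    rw [add_sub_cancel_left, abs_mul]
  rw [h1]
  have h2 : |v' - u| ≤ |v'| + |u| := abs_sub v' u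
  calc Ng γ u * (|v' - u| * |t|)
      ≤ Ng γ u * ((|v'| + |u|) * |t|) :=
        mul_le_mul_of_nonneg_left (mul_le_mul_of_nonneg_right h2 (abs_nonneg t)) (hN0 hγ0 u)
    _ = |v'| * |t| * Ng γ u + |t| * (|u| * Ng γ u) := by ring

lemma ae_fst {P : ℝ → Prop} (ν : Measure ℝ) [SFinite ν]
    (hP : ∀ᵐ u ∂(volume : Measure ℝ), P u) :
    ∀ᵐ q ∂((volume : Measure ℝ).prod ν), P q.1 := by
  rw [ae_iff] at hP ⊢
  have hsub : {q : ℝ × ℝ | ¬ P q.1} ⊆ (toMeasurable volume {u | ¬ P u}) ×ˢ (Set.univ : Set ℝ) :=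
    fun q hq => ⟨subset_toMeasurable _ _ hq, trivial⟩
  refine measure_mono_null hsub ?_
  rw [Measure.prod_prod, measure_toMeasurable, hP, zero_mul]

lemma shift_eq (g : ℝ → ℝ) (u t p a b : ℝ) :
    (∫ z in (p + (a - u) * t)..(p + (b - u) * t), g z)
      = ∫ x in (p + a * t)..(p + b * t), g (x - u * t) := by
  rw [intervalIntegral.integral_comp_sub_right]
  congr 1 <;> ring

lemma swap_lemma (hγ0 : ∀ v r : ℝ, 0 ≤ γ v r)
    (hγint : Integrable fun p : ℝ × ℝ => (p.1 ^ 2 + p.2 ^ 2 + 1) * γ p.1 p.2)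
    (hfm : Measurable fun p : ℝ × ℝ × ℝ => f p.1 p.2.1 p.2.2)
    (hf0 : ∀ x v r : ℝ, 0 ≤ f x v r) (hfle : ∀ x v r : ℝ, f x v r ≤ γ v r)
    (t a b : ℝ) :
    ∫ u : ℝ, ∫ x in Set.uIoc a b, Kf f (x - u * t) u
      = ∫ x in Set.uIoc a b, ∫ u : ℝ, Kf f (x - u * t) u := by
  haveI : IsFiniteMeasure (volume.restrict (Set.uIoc a b)) := by
    constructor
    rw [Measure.restrict_apply_univ]
    exact measure_Ioc_lt_top
  apply integral_integral_swap (f := fun u x => Kf f (x - u * t) u) (μ := volume)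
    (ν := volume.restrict (Set.uIoc a b))
  refine Integrable.mono' (g := fun q : ℝ × ℝ => Ng γ q.1) ?_ ?_ ?_
  · have h := (hNint hγ0 hγint).mul_prod
      (integrable_const (μ := volume.restrict (Set.uIoc a b)) (1 : ℝ))
    simpa using h
  · exact ((hKm hfm).comp_measurable
      ((measurable_snd.sub (measurable_fst.mul_const t)).prodMk measurable_fst)).aestronglyMeasurable
  · filter_upwards [ae_fst _ (hgood2 hγ0 hγint)] with q hq
    show ‖Kf f (q.2 - q.1 * t) q.1‖ ≤ Ng γ q.1
    rw [Real.norm_eq_abs]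
    exact hKle hfm hf0 hfle hq _

end Stmt13Aux


open Stmt13Aux

/-- Flow difference identity: for `f ∈ 𝓕`,
`j_f(p,v,t) - j_f(p,w,t) = ∫_{p+wt}^{p+vt} σ_{𝒯_t f}(x) dx`. -/
theorem stmt13 (f : ℝ → ℝ → ℝ → ℝ) (hf : MemF f) (p v w t : ℝ) :
    jflow f p v t - jflow f p w t = ∫ x in (p + w * t)..(p + v * t), sigmaF (Tfree t f) x := by
  classical
  obtain ⟨⟨γ, ⟨hγ0, hγint⟩, hfm, hf0, -, hfle, -⟩, -⟩ := hf
  have hGi : ∀ v' : ℝ, Integrable fun u : ℝ => ∫ z in p..(p + (v' - u) * t), Kf f z u :=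
    fun v' => hGint hγ0 hγint hfm hf0 hfle p t v'
  have hjf : ∀ v' : ℝ, jflow f p v' t = ∫ u : ℝ, ∫ z in p..(p + (v' - u) * t), Kf f z u := by
    intro v'
    have hminus : jminus f p v' t
        = - ∫ u in Set.Ioi v', ∫ z in p..(p + (v' - u) * t), Kf f z u := by
      rw [← integral_neg]
      unfold jminus
      refine integral_congr_ae (ae_of_all _ fun u => ?_)
      exact intervalIntegral.integral_symm _ _
    have h1 : (∫ u in Set.Iio v' ∪ Set.Ioi v', ∫ z in p..(p + (v' - u) * t), Kf f z u)
        = ∫ u : ℝ, ∫ z in p..(p + (v' - u) * t), Kf f z u := by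
      rw [Set.Iio_union_Ioi,
        setIntegral_congr_set (ae_eq_univ.mpr (by rw [compl_compl]; exact measure_singleton _)),
        setIntegral_univ]
    rw [jflow, hminus, sub_neg_eq_add, ← h1,
      setIntegral_union (show Disjoint (Set.Iio v') (Set.Ioi v') from Set.disjoint_left.mpr fun a (ha : a < v') (ha' : v' < a) => lt_asymm ha ha') measurableSet_Ioi
        (hGi v').integrableOn (hGi v').integrableOn]
    rfl
  have hinner : ∀ x : ℝ, (∫ u : ℝ, Kf f (x - u * t) u) = sigmaF (Tfree t f) x := by
    intro x
    have hi : Integrable (fun q : ℝ × ℝ => q.2 * f (x - q.1 * t) q.1 q.2) (volume.prod volume) := by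
      refine Integrable.mono' (hprod ▸ hg1 hγ0 hγint) ?_ (ae_of_all _ fun q => ?_)
      · exact (measurable_snd.mul (hfm.comp
          ((measurable_const.sub (measurable_fst.mul_const t)).prodMk
            (measurable_fst.prodMk measurable_snd)))).aestronglyMeasurable
      · rw [Real.norm_eq_abs, abs_mul, abs_of_nonneg (hf0 _ _ _)]
        exact mul_le_mul_of_nonneg_left (hfle _ _ _) (abs_nonneg _)
    have h2 := integral_prod _ hi
    calc (∫ u : ℝ, Kf f (x - u * t) u)
        = ∫ q : ℝ × ℝ, q.2 * f (x - q.1 * t) q.1 q.2 ∂(volume.prod volume) := h2.symm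
      _ = sigmaF (Tfree t f) x := by rw [← hprod]; rfl
  calc jflow f p v t - jflow f p w t
      = (∫ u : ℝ, ∫ z in p..(p + (v - u) * t), Kf f z u)
          - ∫ u : ℝ, ∫ z in p..(p + (w - u) * t), Kf f z u := by rw [hjf v, hjf w]
    _ = ∫ u : ℝ, ((∫ z in p..(p + (v - u) * t), Kf f z u)
          - ∫ z in p..(p + (w - u) * t), Kf f z u) := (integral_sub (hGi v) (hGi w)).symm
    _ = ∫ u : ℝ, ∫ x in (p + w * t)..(p + v * t), Kf f (x - u * t) u := by
        refine integral_congr_ae ?_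
        filter_upwards [hgood2 hγ0 hγint] with u hu
        rw [intervalIntegral.integral_interval_sub_left (hKII hfm hf0 hfle hu _ _)
          (hKII hfm hf0 hfle hu _ _)]
        exact shift_eq _ u t p w v
    _ = ∫ u : ℝ, (if (p + w * t) ≤ (p + v * t) then (1 : ℝ) else -1)
          • ∫ x in Set.uIoc (p + w * t) (p + v * t), Kf f (x - u * t) u := by
        simp_rw [intervalIntegral.intervalIntegral_eq_integral_uIoc]
    _ = (if (p + w * t) ≤ (p + v * t) then (1 : ℝ) else -1)
          • ∫ u : ℝ, ∫ x in Set.uIoc (p + w * t) (p + v * t), Kf f (x - u * t) u :=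
        integral_smul _ _
    _ = (if (p + w * t) ≤ (p + v * t) then (1 : ℝ) else -1)
          • ∫ x in Set.uIoc (p + w * t) (p + v * t), ∫ u : ℝ, Kf f (x - u * t) u := by
        rw [swap_lemma hγ0 hγint hfm hf0 hfle t _ _]
    _ = ∫ x in (p + w * t)..(p + v * t), ∫ u : ℝ, Kf f (x - u * t) u :=
        (intervalIntegral.intervalIntegral_eq_integral_uIoc _ _ _ _).symm
    _ = ∫ x in (p + w * t)..(p + v * t), sigmaF (Tfree t f) x :=
        intervalIntegral.integral_congr fun x _ => hinner x
end

section
/- Quasiparticle position formula: for g ∈ 𝓖, the position u_{g,v,t}(q) := q + vt + j_{𝒞_q g}(q,v,t) satisfies, for any reference point (p,w), u_{g,v,t}(q) = C_{g,p}(q) + vt + j_{𝒞_p g}(p,w,t) + ∫_{p+wt}^{C_{g,p}(q)+vt} σ_{𝒯_t 𝒞_p g}(x) dx. -/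
open MeasureTheory Filter Topology

set_option linter.unusedSectionVars false

lemma sigma_cont_s14 {g γ : _} (hγ : MemL γ) (hfg : MemFgamma g γ) : Continuous (sigmaF g) := by
  obtain ⟨hγnn, hγint⟩ := hγ
  obtain ⟨hmeas, hnn, hC1, hdom, -⟩ := hfg
  apply continuous_of_dominated (bound := fun p : ℝ × ℝ => |p.2| * γ p.1 p.2)
  · intro x
    exact (measurable_snd.mul
      (hmeas.comp (measurable_const.prodMk measurable_id))).aestronglyMeasurable
  · intro x
    filter_upwards with p
    rw [Real.norm_eq_abs, abs_mul, abs_of_nonneg (hnn _ _ _)]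
    exact mul_le_mul_of_nonneg_left (hdom _ _ _) (abs_nonneg _)
  · apply hγint.mono'
    · have h1 : AEStronglyMeasurable (fun p : ℝ × ℝ => (p.1 ^ 2 + p.2 ^ 2 + 1) * γ p.1 p.2)
          volume := hγint.aestronglyMeasurable
      have : (fun p : ℝ × ℝ => |p.2| * γ p.1 p.2) = fun p : ℝ × ℝ =>
          (|p.2| / (p.1 ^ 2 + p.2 ^ 2 + 1)) * ((p.1 ^ 2 + p.2 ^ 2 + 1) * γ p.1 p.2) := by
        funext p
        have hpos : p.1 ^ 2 + p.2 ^ 2 + 1 ≠ 0 := by positivity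
        field_simp
      rw [this]
      exact ((continuous_snd.abs.div (by continuity) (fun p => by positivity)).aestronglyMeasurable).mul h1
    · filter_upwards with p
      rw [Real.norm_eq_abs, abs_mul, abs_abs, abs_of_nonneg (hγnn _ _)]
      have : |p.2| ≤ p.1 ^ 2 + p.2 ^ 2 + 1 := by nlinarith [sq_nonneg (|p.2| - 1), sq_abs p.2, sq_nonneg p.1]
      exact mul_le_mul_of_nonneg_right this (hγnn _ _)
  · filter_upwards with p
    exact continuous_const.mul (hC1 p.1 p.2).continuous


lemma invFun_unique {α β : Sort*} [Nonempty α] {f : α → β} (hinj : Function.Injective f)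
    {a : α} {b : β} (h : f a = b) : Function.invFun f b = a :=
  hinj (by rw [Function.invFun_eq ⟨a, h⟩, h])

section CfunFacts

variable {g : ℝ → ℝ → ℝ → ℝ} {c : ℝ}
  (hσc : Continuous (sigmaF g)) (hσpos : ∀ x, 0 < sigmaF g x)
  (hσle : ∀ x, sigmaF g x ≤ c) (hc : c < 1)

lemma Cfun_self (p : ℝ) : Cfun g p p = p := by simp [Cfun]

include hσc in
lemma Cfun_hasDeriv (p b : ℝ) : HasDerivAt (Cfun g p) (1 - sigmaF g b) b := by
  have h := intervalIntegral.integral_hasDerivAt_right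
    (hσc.intervalIntegrable p b) (hσc.stronglyMeasurableAtFilter volume (𝓝 b))
    hσc.continuousAt
  exact (hasDerivAt_id b).sub h

include hσc in
lemma Cfun_cont (p : ℝ) : Continuous (Cfun g p) :=
  continuous_iff_continuousAt.2 fun b => (Cfun_hasDeriv hσc p b).differentiableAt.continuousAt

include hσc in
lemma Cfun_trans (p q x : ℝ) : Cfun g q x = Cfun g p x + (q - Cfun g p q) := by
  have h := intervalIntegral.integral_add_adjacent_intervals
    (μ := volume) (hσc.intervalIntegrable p q) (hσc.intervalIntegrable q x)
  simp only [Cfun]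
  linarith [h]

include hσc hσpos hσle hc in
lemma Cfun_growth (p : ℝ) {a b : ℝ} (hab : a ≤ b) :
    (1 - c) * (b - a) ≤ Cfun g p b - Cfun g p a ∧ Cfun g p b - Cfun g p a ≤ b - a := by
  have hadd := intervalIntegral.integral_add_adjacent_intervals
    (μ := volume) (hσc.intervalIntegrable p a) (hσc.intervalIntegrable a b)
  have hdiff : Cfun g p b - Cfun g p a = (b - a) - ∫ x in a..b, sigmaF g x := by
    simp only [Cfun]; linarith [hadd]
  have hub : (∫ x in a..b, sigmaF g x) ≤ c * (b - a) := by
    have := intervalIntegral.integral_mono_on (μ := volume) hab (hσc.intervalIntegrable a b)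
      (intervalIntegrable_const (c := c)) (fun x _ => hσle x)
    simpa [mul_comm] using this
  have hlb : 0 ≤ ∫ x in a..b, sigmaF g x :=
    intervalIntegral.integral_nonneg hab (fun x _ => (hσpos x).le)
  constructor <;> nlinarith

include hσc hσpos hσle hc in
lemma Cfun_strictMono (p : ℝ) : StrictMono (Cfun g p) := by
  intro a b hab
  have := (Cfun_growth hσc hσpos hσle hc p hab.le).1
  nlinarith

include hσc hσpos hσle hc in
lemma Cfun_surj (p : ℝ) : Function.Surjective (Cfun g p) := by
  intro y
  have hc1 : (0:ℝ) < 1 - c := by linarith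
  rcases le_or_gt p y with hy | hy
  · have hd : 0 ≤ (y - p) / (1 - c) := div_nonneg (by linarith) hc1.le
    have hpb : p ≤ p + (y - p) / (1 - c) := by linarith
    have hgrow := (Cfun_growth hσc hσpos hσle hc p hpb).1
    rw [Cfun_self] at hgrow
    have hkey : (1 - c) * ((y - p) / (1 - c)) = y - p := by field_simp
    have hCb : y ≤ Cfun g p (p + (y - p) / (1 - c)) := by
      have h2 : (1 - c) * (p + (y - p) / (1 - c) - p) = y - p := by
        rw [show p + (y - p) / (1 - c) - p = (y - p) / (1 - c) by ring, hkey]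
      linarith
    have hy' : y ∈ Set.Icc (Cfun g p p) (Cfun g p (p + (y - p) / (1 - c))) := by
      rw [Cfun_self]; exact ⟨hy, hCb⟩
    obtain ⟨x, -, hx⟩ := intermediate_value_Icc hpb (Cfun_cont hσc p).continuousOn hy'
    exact ⟨x, hx⟩
  · have hd : 0 ≤ (p - y) / (1 - c) := div_nonneg (by linarith) hc1.le
    have hap : p - (p - y) / (1 - c) ≤ p := by linarith
    have hgrow := (Cfun_growth hσc hσpos hσle hc p hap).1
    rw [Cfun_self] at hgrow
    have hkey : (1 - c) * ((p - y) / (1 - c)) = p - y := by field_simp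
    have hCa : Cfun g p (p - (p - y) / (1 - c)) ≤ y := by
      have h2 : (1 - c) * (p - (p - (p - y) / (1 - c))) = p - y := by
        rw [show p - (p - (p - y) / (1 - c)) = (p - y) / (1 - c) by ring, hkey]
      linarith
    have hy' : y ∈ Set.Icc (Cfun g p (p - (p - y) / (1 - c))) (Cfun g p p) := by
      rw [Cfun_self]; exact ⟨hCa, hy.le⟩
    obtain ⟨x, -, hx⟩ := intermediate_value_Icc hap (Cfun_cont hσc p).continuousOn hy'
    exact ⟨x, hx⟩

include hσc hσpos hσle hc in
lemma Cinv_cont (p : ℝ) : Continuous (Function.invFun (Cfun g p)) := by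
  have hm := Cfun_strictMono hσc hσpos hσle hc p
  have hs := Cfun_surj hσc hσpos hσle hc p
  have he : Function.invFun (Cfun g p) = (StrictMono.orderIsoOfSurjective _ hm hs).symm := by
    funext y
    refine invFun_unique hm.injective ?_
    exact (StrictMono.orderIsoOfSurjective _ hm hs).apply_symm_apply y
  rw [he]
  exact OrderIso.continuous _

include hσc hσpos hσle hc in
lemma Cinv_right (p y : ℝ) : Cfun g p (Function.invFun (Cfun g p) y) = y :=
  Function.invFun_eq (Cfun_surj hσc hσpos hσle hc p y)

include hσc hσpos hσle hc in
lemma Cinv_left (p x : ℝ) : Function.invFun (Cfun g p) (Cfun g p x) = x :=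
  invFun_unique (Cfun_strictMono hσc hσpos hσle hc p).injective rfl

include hσc hσpos hσle hc in
lemma Cop_trans (p q x v r : ℝ) :
    Cop g q x v r = Cop g p (x - (q - Cfun g p q)) v r := by
  have key : Function.invFun (Cfun g q) x
      = Function.invFun (Cfun g p) (x - (q - Cfun g p q)) := by
    have hmq : StrictMono (Cfun g q) := Cfun_strictMono hσc hσpos hσle hc q
    refine invFun_unique hmq.injective ?_
    rw [Cfun_trans hσc p q, Cinv_right hσc hσpos hσle hc p]
    ring
  simp only [Cop, key]

end CfunFacts

lemma jflow_shift (h : ℝ → ℝ → ℝ → ℝ) (s x v t : ℝ) :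
    jflow (fun x' v' r' => h (x' - s) v' r') x v t = jflow h (x - s) v t := by
  have hker : ∀ (w a b : ℝ), (∫ z in a..b, ∫ r : ℝ, r * h (z - s) w r)
      = ∫ z in (a - s)..(b - s), ∫ r : ℝ, r * h z w r := fun w a b =>
    intervalIntegral.integral_comp_sub_right (fun z => ∫ r : ℝ, r * h z w r) s
  have h1 : ∀ w : ℝ, (∫ z in x..(x + (v - w) * t), ∫ r : ℝ, r * h (z - s) w r)
      = ∫ z in (x - s)..(x - s + (v - w) * t), ∫ r : ℝ, r * h z w r := by
    intro w; rw [hker]; congr 1; ring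
  have h2 : ∀ w : ℝ, (∫ z in (x + (v - w) * t)..x, ∫ r : ℝ, r * h (z - s) w r)
      = ∫ z in (x - s + (v - w) * t)..(x - s), ∫ r : ℝ, r * h z w r := by
    intro w; rw [hker]; congr 1; ring
  simp only [jflow, jplus, jminus, h1, h2]

section CopFacts

variable {g : ℝ → ℝ → ℝ → ℝ} {c : ℝ}
  (hσc : Continuous (sigmaF g)) (hσpos : ∀ x, 0 < sigmaF g x)
  (hσle : ∀ x, sigmaF g x ≤ c) (hc : c < 1)

include hσle hc in
lemma one_sub_sigma_pos (y : ℝ) : 0 < 1 - sigmaF g y := by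
  have := hσle y; linarith

lemma sigma_Cop (p x : ℝ) :
    sigmaF (Cop g p) x = sigmaF g (Function.invFun (Cfun g p) x)
      / (1 - sigmaF g (Function.invFun (Cfun g p) x)) := by
  simp only [sigmaF, Cop, mul_div_assoc']
  rw [integral_div]

include hσc hσpos hσle hc in
lemma sigma_Cop_cont (p : ℝ) : Continuous (sigmaF (Cop g p)) := by
  have hic := Cinv_cont hσc hσpos hσle hc p
  have : sigmaF (Cop g p) = fun x => sigmaF g (Function.invFun (Cfun g p) x)
      / (1 - sigmaF g (Function.invFun (Cfun g p) x)) := funext (sigma_Cop p)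
  rw [this]
  exact (hσc.comp hic).div (continuous_const.sub (hσc.comp hic))
    (fun x => (one_sub_sigma_pos hσle hc _).ne')

include hσc hσpos hσle hc in
lemma integral_sigma_Cop (p q : ℝ) :
    (∫ x in p..(Cfun g p q), sigmaF (Cop g p) x) = ∫ x in p..q, sigmaF g x := by
  have key := intervalIntegral.integral_comp_smul_deriv
    (f := Cfun g p) (f' := fun x => 1 - sigmaF g x) (g := sigmaF (Cop g p)) (a := p) (b := q)
    (fun x _ => Cfun_hasDeriv hσc p x) ((continuous_const.sub hσc).continuousOn)
    (sigma_Cop_cont hσc hσpos hσle hc p)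
  rw [Cfun_self] at key
  rw [← key]
  apply intervalIntegral.integral_congr
  intro x _
  simp only [Function.comp, smul_eq_mul]
  rw [sigma_Cop, Cinv_left hσc hσpos hσle hc, mul_div_assoc']
  exact mul_div_cancel_left₀ _ (one_sub_sigma_pos hσle hc x).ne'

end CopFacts


lemma meas_param {K : ℝ × ℝ → ℝ} (hK : Measurable K) {e₁ e₂ : ℝ → ℝ}
    (h₁ : Measurable e₁) (h₂ : Measurable e₂) :
    Measurable fun w => ∫ z in e₁ w..e₂ w, K (w, z) := by
  have key : ∀ (u₁ u₂ : ℝ → ℝ), Measurable u₁ → Measurable u₂ →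
      Measurable fun w => ∫ z in Set.Ioc (u₁ w) (u₂ w), K (w, z) := by
    intro u₁ u₂ hu₁ hu₂
    have hSet : MeasurableSet {p : ℝ × ℝ | u₁ p.1 < p.2 ∧ p.2 ≤ u₂ p.1} :=
      (measurableSet_lt (hu₁.comp measurable_fst) measurable_snd).inter
        (measurableSet_le measurable_snd (hu₂.comp measurable_fst))
    have hJ : Measurable fun p : ℝ × ℝ => if u₁ p.1 < p.2 ∧ p.2 ≤ u₂ p.1 then K p else 0 :=
      Measurable.ite hSet hK measurable_const
    have heq : (fun w => ∫ z in Set.Ioc (u₁ w) (u₂ w), K (w, z))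
        = fun w => ∫ z, (if u₁ w < z ∧ z ≤ u₂ w then K (w, z) else 0) := by
      funext w
      rw [← MeasureTheory.integral_indicator measurableSet_Ioc]
      congr 1
      funext z
      simp [Set.indicator_apply, Set.mem_Ioc]
    rw [heq]
    exact (hJ.stronglyMeasurable.integral_prod_right').measurable
  have hsplit : (fun w => ∫ z in e₁ w..e₂ w, K (w, z))
      = fun w => (∫ z in Set.Ioc (e₁ w) (e₂ w), K (w, z))
        - ∫ z in Set.Ioc (e₂ w) (e₁ w), K (w, z) := by
    funext w; rfl
  rw [hsplit]
  exact (key _ _ h₁ h₂).sub (key _ _ h₂ h₁)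

lemma intervalIntegrable_of_bounded {h : ℝ → ℝ} (hm : AEStronglyMeasurable h volume)
    {M : ℝ} (hb : ∀ z, |h z| ≤ M) (a b : ℝ) : IntervalIntegrable h volume a b := by
  constructor <;>
  · refine Integrable.mono' (g := fun _ => M)
      (integrableOn_const measure_Ioc_lt_top.ne) hm.restrict ?_
    filter_upwards with z using hb z

lemma integral_swap_uIoc {L : ℝ × ℝ → ℝ} (hL : Measurable L) (c₁ c₂ : ℝ) {β : ℝ → ℝ}
    (hβ : Integrable β) (hbd : ∀ᵐ w : ℝ, ∀ z, |L (w, z)| ≤ β w) :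
    (∫ w : ℝ, ∫ z in c₁..c₂, L (w, z)) = ∫ z in c₁..c₂, ∫ w : ℝ, L (w, z) := by
  set S := Set.uIoc c₁ c₂ with hSdef
  haveI : IsFiniteMeasure ((volume : Measure ℝ).restrict S) := by
    constructor
    rw [Measure.restrict_apply_univ]
    exact measure_Ioc_lt_top
  have hInt : Integrable L ((volume : Measure ℝ).prod (volume.restrict S)) := by
    rw [integrable_prod_iff hL.aestronglyMeasurable]
    constructor
    · filter_upwards [hbd] with w hw
      refine Integrable.mono' (g := fun _ => β w) (integrable_const _)
        (hL.comp (measurable_const.prodMk measurable_id)).aestronglyMeasurable ?_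
      filter_upwards with z using hw z
    · refine Integrable.mono' (hβ.const_mul ((volume : Measure ℝ) S).toReal)
        (hL.norm.stronglyMeasurable.integral_prod_right').aestronglyMeasurable ?_
      filter_upwards [hbd] with w hw
      have hnn : 0 ≤ ∫ z in S, ‖L (w, z)‖ := integral_nonneg fun z => norm_nonneg _
      rw [Real.norm_eq_abs, abs_of_nonneg hnn]
      have hsec : Integrable (fun z => ‖L (w, z)‖) (volume.restrict S) := by
        refine Integrable.mono' (g := fun _ => β w) (integrable_const _)
          ((hL.comp (measurable_const.prodMk measurable_id)).norm).aestronglyMeasurable ?_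
        filter_upwards with z
        rw [norm_norm]
        exact hw z
      calc (∫ z in S, ‖L (w, z)‖) ≤ ∫ _z in S, β w :=
            integral_mono hsec (integrable_const _) fun z => hw z
        _ = ((volume : Measure ℝ) S).toReal * β w := by rw [setIntegral_const, smul_eq_mul]; rfl
  have swap := MeasureTheory.integral_integral_swap
    (f := fun w z => L (w, z)) (μ := (volume : Measure ℝ)) (ν := volume.restrict S) hInt
  calc (∫ w : ℝ, ∫ z in c₁..c₂, L (w, z))
      = ∫ w : ℝ, ((if c₁ ≤ c₂ then (1 : ℝ) else -1) • ∫ z in S, L (w, z)) := by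
        congr 1; funext w
        exact intervalIntegral.intervalIntegral_eq_integral_uIoc _ _ _ _
    _ = (if c₁ ≤ c₂ then (1 : ℝ) else -1) • ∫ w : ℝ, ∫ z in S, L (w, z) := integral_smul _ _
    _ = (if c₁ ≤ c₂ then (1 : ℝ) else -1) • ∫ z in S, ∫ w : ℝ, L (w, z) := by rw [swap]
    _ = ∫ z in c₁..c₂, ∫ w : ℝ, L (w, z) :=
        (intervalIntegral.intervalIntegral_eq_integral_uIoc _ _ _ _).symm

noncomputable def Kker (f : ℝ → ℝ → ℝ → ℝ) : ℝ × ℝ → ℝ := fun p => ∫ r : ℝ, r * f p.2 p.1 r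

noncomputable def gbar (γ' : ℝ → ℝ → ℝ) (w : ℝ) : ℝ := ∫ r : ℝ, |r| * γ' w r

noncomputable def gBig (γ' : ℝ → ℝ → ℝ) (w : ℝ) : ℝ := ∫ r : ℝ, (w ^ 2 + r ^ 2 + 1) * γ' w r

section Star

variable {f : ℝ → ℝ → ℝ → ℝ} {γ' : ℝ → ℝ → ℝ}
  (hmeas : Measurable fun p : ℝ × ℝ × ℝ => f p.1 p.2.1 p.2.2)
  (hdom : ∀ x v r, |f x v r| ≤ γ' v r)
  (hγint : Integrable fun p : ℝ × ℝ => (p.1 ^ 2 + p.2 ^ 2 + 1) * γ' p.1 p.2)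

include hmeas in
lemma Kker_meas : Measurable (Kker f) := by
  have h : Measurable fun q : (ℝ × ℝ) × ℝ => q.2 * f q.1.2 q.1.1 q.2 :=
    measurable_snd.mul (hmeas.comp
      ((measurable_fst.snd).prodMk ((measurable_fst.fst).prodMk measurable_snd)))
  exact (h.stronglyMeasurable.integral_prod_right').measurable

include hmeas hdom hγint in
lemma good_ae : ∀ᵐ w : ℝ, (∀ z, |Kker f (w, z)| ≤ gbar γ' w)
    ∧ (1 + |w|) * gbar γ' w ≤ gBig γ' w ∧ 0 ≤ gbar γ' w := by
  have hprod : Integrable (fun p : ℝ × ℝ => (p.1 ^ 2 + p.2 ^ 2 + 1) * γ' p.1 p.2)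
      ((volume : Measure ℝ).prod volume) := by rwa [← MeasureTheory.Measure.volume_eq_prod]
  filter_upwards [hprod.prod_right_ae] with w hW
  have hγnn : ∀ r, 0 ≤ γ' w r := fun r => (abs_nonneg (f 0 w r)).trans (hdom 0 w r)
  have habs : Integrable (fun r => |r| * γ' w r) := by
    refine hW.mono' ?_ ?_
    · have heq : (fun r => |r| * γ' w r) = fun r =>
          (|r| / (w ^ 2 + r ^ 2 + 1)) * ((w ^ 2 + r ^ 2 + 1) * γ' w r) := by
        funext r
        have hpos : w ^ 2 + r ^ 2 + 1 ≠ 0 := by positivity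
        field_simp
      rw [heq]
      exact ((continuous_abs.div (by continuity) fun r => by positivity).aestronglyMeasurable).mul
        hW.aestronglyMeasurable
    · filter_upwards with r
      rw [Real.norm_eq_abs, abs_mul, abs_abs, abs_of_nonneg (hγnn r)]
      refine mul_le_mul_of_nonneg_right ?_ (hγnn r)
      nlinarith [sq_nonneg (|r| - 1), sq_abs r, sq_nonneg w]
  have hgbar_nn : 0 ≤ gbar γ' w := integral_nonneg fun r => mul_nonneg (abs_nonneg r) (hγnn r)
  refine ⟨?_, ?_, hgbar_nn⟩
  · intro z
    have hsecm : Measurable fun r : ℝ => r * f z w r :=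
      measurable_id.mul (hmeas.comp
        (measurable_const.prodMk (measurable_const.prodMk measurable_id)))
    have hsec : Integrable fun r : ℝ => r * f z w r := by
      refine habs.mono' hsecm.aestronglyMeasurable ?_
      filter_upwards with r
      rw [Real.norm_eq_abs, abs_mul]
      exact mul_le_mul_of_nonneg_left (hdom z w r) (abs_nonneg r)
    have h1 : |Kker f (w, z)| ≤ ∫ r : ℝ, |r| * |f z w r| := by
      simpa [Kker, Real.norm_eq_abs, abs_mul] using
        norm_integral_le_integral_norm (fun r : ℝ => r * f z w r) (μ := volume)
    refine h1.trans (integral_mono ?_ habs fun r =>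
      mul_le_mul_of_nonneg_left (hdom z w r) (abs_nonneg r))
    simpa [abs_mul] using hsec.abs
  · have heq : (1 + |w|) * gbar γ' w = ∫ r : ℝ, (1 + |w|) * (|r| * γ' w r) :=
      (integral_const_mul _ _).symm
    rw [heq]
    refine integral_mono (habs.const_mul _) hW fun r => ?_
    have h1 : (1 + |w|) * |r| ≤ w ^ 2 + r ^ 2 + 1 := by
      nlinarith [sq_nonneg (|w| - |r|), sq_nonneg (|r| - 1), sq_abs r, sq_abs w,
        abs_nonneg w, abs_nonneg r]
    calc (1 + |w|) * (|r| * γ' w r) = ((1 + |w|) * |r|) * γ' w r := by ring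
      _ ≤ (w ^ 2 + r ^ 2 + 1) * γ' w r := mul_le_mul_of_nonneg_right h1 (hγnn r)

include hγint in
lemma gBig_int : Integrable (gBig γ') := by
  have hprod : Integrable (fun p : ℝ × ℝ => (p.1 ^ 2 + p.2 ^ 2 + 1) * γ' p.1 p.2)
      ((volume : Measure ℝ).prod volume) := by rwa [← MeasureTheory.Measure.volume_eq_prod]
  exact hprod.integral_prod_left

include hmeas hdom hγint in
lemma sigma_iterated (z : ℝ) : sigmaF f z = ∫ w : ℝ, Kker f (w, z) := by
  have hγnn : ∀ v r, 0 ≤ γ' v r := fun v r => (abs_nonneg (f 0 v r)).trans (hdom 0 v r)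
  have hint : Integrable (fun p : ℝ × ℝ => p.2 * f z p.1 p.2)
      ((volume : Measure ℝ).prod volume) := by
    rw [← MeasureTheory.Measure.volume_eq_prod]
    refine hγint.mono'
      ((measurable_snd.mul (hmeas.comp
        (measurable_const.prodMk measurable_id))).aestronglyMeasurable) ?_
    filter_upwards with p
    rw [Real.norm_eq_abs, abs_mul]
    have h2 : |p.2| ≤ p.1 ^ 2 + p.2 ^ 2 + 1 := by
      nlinarith [sq_nonneg (|p.2| - 1), sq_abs p.2, sq_nonneg p.1]
    calc |p.2| * |f z p.1 p.2| ≤ |p.2| * γ' p.1 p.2 :=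
          mul_le_mul_of_nonneg_left (hdom z p.1 p.2) (abs_nonneg _)
      _ ≤ (p.1 ^ 2 + p.2 ^ 2 + 1) * γ' p.1 p.2 :=
          mul_le_mul_of_nonneg_right h2 (hγnn _ _)
  calc sigmaF f z = ∫ p : ℝ × ℝ, p.2 * f z p.1 p.2 := rfl
    _ = ∫ p : ℝ × ℝ, p.2 * f z p.1 p.2 ∂((volume : Measure ℝ).prod volume) := by
        rw [← MeasureTheory.Measure.volume_eq_prod]
    _ = ∫ w : ℝ, ∫ r : ℝ, r * f z w r := integral_prod _ hint
    _ = ∫ w : ℝ, Kker f (w, z) := rfl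

include hmeas in
lemma jflow_eq (x v t : ℝ)
    (hψ : Integrable fun w : ℝ => ∫ z in x..(x + (v - w) * t), Kker f (w, z)) :
    jflow f x v t = ∫ w : ℝ, ∫ z in x..(x + (v - w) * t), Kker f (w, z) := by
  have hplus : jplus f x v t
      = ∫ w in Set.Iio v, (∫ z in x..(x + (v - w) * t), Kker f (w, z)) := rfl
  have hFG : (fun w => ∫ z in (x + (v - w) * t)..x, ∫ r : ℝ, r * f z w r)
      = fun w => -(∫ z in x..(x + (v - w) * t), Kker f (w, z)) :=
    funext fun w => intervalIntegral.integral_symm _ _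
  have hminus : jminus f x v t
      = ∫ w in Set.Ioi v, (-(∫ z in x..(x + (v - w) * t), Kker f (w, z))) := by
    rw [jminus, hFG]
  rw [jflow, hplus, hminus, integral_neg, sub_neg_eq_add]
  have hIio : (∫ w in Set.Iio v, (∫ z in x..(x + (v - w) * t), Kker f (w, z)))
      = ∫ w in Set.Iic v, (∫ z in x..(x + (v - w) * t), Kker f (w, z)) :=
    setIntegral_congr_set Iio_ae_eq_Iic
  rw [hIio]
  exact intervalIntegral.integral_Iic_add_Ioi hψ.integrableOn hψ.integrableOn

include hmeas hdom hγint in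
lemma jflow_key (t a b u v : ℝ) :
    jflow f b v t - jflow f a u t
      = (∫ x in (a + u * t)..(b + v * t), sigmaF (Tfree t f) x)
        - ∫ x in a..b, sigmaF f x := by
  have hK : Measurable (Kker f) := Kker_meas hmeas
  have hgood := good_ae hmeas hdom hγint
  have hBig := gBig_int hγint
  -- integrability of the ψ–functions
  have haff : ∀ (e₁ e₂ : ℝ → ℝ), Measurable e₁ → Measurable e₂ → ∀ M : ℝ, 0 ≤ M →
      (∀ w, |e₂ w - e₁ w| ≤ M * (1 + |w|)) →
      Integrable (fun w : ℝ => ∫ z in (e₁ w)..(e₂ w), Kker f (w, z)) := by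
    intro e₁ e₂ he₁ he₂ M hM hlen
    refine Integrable.mono' (hBig.const_mul M)
      (meas_param hK he₁ he₂).aestronglyMeasurable ?_
    filter_upwards [hgood] with w hw
    obtain ⟨hw1, hw2, hw3⟩ := hw
    rw [Real.norm_eq_abs]
    have h1 : |∫ z in (e₁ w)..(e₂ w), Kker f (w, z)| ≤ gbar γ' w * |e₂ w - e₁ w| := by
      simpa [Real.norm_eq_abs] using
        intervalIntegral.norm_integral_le_of_norm_le_const
          (C := gbar γ' w) (f := fun z => Kker f (w, z)) (a := e₁ w) (b := e₂ w)
          (fun z _ => by rw [Real.norm_eq_abs]; exact hw1 z)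
    calc |∫ z in (e₁ w)..(e₂ w), Kker f (w, z)| ≤ gbar γ' w * |e₂ w - e₁ w| := h1
      _ ≤ gbar γ' w * (M * (1 + |w|)) := mul_le_mul_of_nonneg_left (hlen w) hw3
      _ = M * ((1 + |w|) * gbar γ' w) := by ring
      _ ≤ M * gBig γ' w := mul_le_mul_of_nonneg_left hw2 hM
  have hψ1 : Integrable (fun w : ℝ => ∫ z in b..(b + (v - w) * t), Kker f (w, z)) := by
    refine haff _ _ measurable_const (by fun_prop) ((|v| + 1) * |t|) (by positivity) fun w => ?_
    have : |b + (v - w) * t - b| = |v - w| * |t| := by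
      rw [show b + (v - w) * t - b = (v - w) * t from by ring, abs_mul]
    rw [this]
    have hvw : |v - w| ≤ |v| + |w| := by
      rw [sub_eq_add_neg]
      exact (abs_add_le v (-w)).trans (by rw [abs_neg])
    nlinarith [abs_nonneg w, abs_nonneg t, abs_nonneg v,
      mul_le_mul_of_nonneg_right hvw (abs_nonneg t),
      mul_nonneg (mul_nonneg (abs_nonneg v) (abs_nonneg w)) (abs_nonneg t)]
  have hψ2 : Integrable (fun w : ℝ => ∫ z in a..(a + (u - w) * t), Kker f (w, z)) := by
    refine haff _ _ measurable_const (by fun_prop) ((|u| + 1) * |t|) (by positivity) fun w => ?_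
    have : |a + (u - w) * t - a| = |u - w| * |t| := by
      rw [show a + (u - w) * t - a = (u - w) * t from by ring, abs_mul]
    rw [this]
    have hvw : |u - w| ≤ |u| + |w| := by
      rw [sub_eq_add_neg]
      exact (abs_add_le u (-w)).trans (by rw [abs_neg])
    nlinarith [abs_nonneg w, abs_nonneg t, abs_nonneg u,
      mul_le_mul_of_nonneg_right hvw (abs_nonneg t),
      mul_nonneg (mul_nonneg (abs_nonneg u) (abs_nonneg w)) (abs_nonneg t)]
  have hψ3 : Integrable
      (fun w : ℝ => ∫ z in (a + (u - w) * t)..(b + (v - w) * t), Kker f (w, z)) := by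
    refine haff _ _ (by fun_prop) (by fun_prop) (|b - a + (v - u) * t|) (abs_nonneg _)
      fun w => ?_
    have : b + (v - w) * t - (a + (u - w) * t) = b - a + (v - u) * t := by ring
    rw [this]
    nlinarith [abs_nonneg w, abs_nonneg (b - a + (v - u) * t)]
  have hψ4 : Integrable (fun w : ℝ => ∫ z in a..b, Kker f (w, z)) := by
    refine haff _ _ measurable_const measurable_const (|b - a|) (abs_nonneg _) fun w => ?_
    nlinarith [abs_nonneg w, abs_nonneg (b - a)]
  have h1 : jflow f b v t = ∫ w : ℝ, ∫ z in b..(b + (v - w) * t), Kker f (w, z) :=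
    jflow_eq hmeas b v t hψ1
  have h2 : jflow f a u t = ∫ w : ℝ, ∫ z in a..(a + (u - w) * t), Kker f (w, z) :=
    jflow_eq hmeas a u t hψ2
  have hsub : jflow f b v t - jflow f a u t
      = ∫ w : ℝ, ((∫ z in b..(b + (v - w) * t), Kker f (w, z))
        - ∫ z in a..(a + (u - w) * t), Kker f (w, z)) := by
    rw [h1, h2, ← integral_sub hψ1 hψ2]
  have hae : (fun w : ℝ => (∫ z in b..(b + (v - w) * t), Kker f (w, z))
        - ∫ z in a..(a + (u - w) * t), Kker f (w, z))
      =ᵐ[volume] fun w : ℝ => (∫ z in (a + (u - w) * t)..(b + (v - w) * t), Kker f (w, z))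
        - ∫ z in a..b, Kker f (w, z) := by
    filter_upwards [hgood] with w hw
    obtain ⟨hw1, -, -⟩ := hw
    have hsecm : Measurable fun z => Kker f (w, z) :=
      hK.comp (measurable_const.prodMk measurable_id)
    have hii : ∀ a' b' : ℝ, IntervalIntegrable (fun z => Kker f (w, z)) volume a' b' :=
      fun a' b' => intervalIntegrable_of_bounded hsecm.aestronglyMeasurable hw1 a' b'
    have hA := intervalIntegral.integral_add_adjacent_intervals (μ := volume)
      (hii a b) (hii b (b + (v - w) * t))
    have hB := intervalIntegral.integral_add_adjacent_intervals (μ := volume)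
      (hii a (a + (u - w) * t)) (hii (a + (u - w) * t) (b + (v - w) * t))
    linarith [hA, hB]
  rw [hsub, integral_congr_ae hae, integral_sub hψ3 hψ4]
  have hgbar_le : ∀ᵐ w : ℝ, ∀ z : ℝ, |Kker f (w, z)| ≤ gBig γ' w := by
    filter_upwards [hgood] with w hw
    obtain ⟨hw1, hw2, hw3⟩ := hw
    intro z
    have : gbar γ' w ≤ gBig γ' w := by nlinarith [abs_nonneg w]
    exact (hw1 z).trans this
  congr 1
  · -- transported term
    have hcomp : ∀ w : ℝ, (∫ z in (a + (u - w) * t)..(b + (v - w) * t), Kker f (w, z))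
        = ∫ x in (a + u * t)..(b + v * t), Kker f (w, x - w * t) := by
      intro w
      have h := intervalIntegral.integral_comp_sub_right
        (a := a + u * t) (b := b + v * t) (fun z => Kker f (w, z)) (w * t)
      rw [show a + (u - w) * t = a + u * t - w * t from by ring,
        show b + (v - w) * t = b + v * t - w * t from by ring]
      exact h.symm
    simp only [hcomp]
    have hL : Measurable fun p : ℝ × ℝ => Kker f (p.1, p.2 - p.1 * t) :=
      hK.comp (measurable_fst.prodMk (measurable_snd.sub (measurable_fst.mul measurable_const)))
    have hbd : ∀ᵐ w : ℝ, ∀ x : ℝ, |Kker f (w, x - w * t)| ≤ gBig γ' w := by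
      filter_upwards [hgbar_le] with w hw
      intro x
      exact hw _
    have hswap := integral_swap_uIoc hL (a + u * t) (b + v * t) hBig hbd
    rw [hswap]
    refine intervalIntegral.integral_congr fun x _ => ?_
    have hmeasT : Measurable fun p : ℝ × ℝ × ℝ => Tfree t f p.1 p.2.1 p.2.2 :=
      hmeas.comp ((measurable_fst.sub (measurable_snd.fst.mul measurable_const)).prodMk
        measurable_snd)
    have hdomT : ∀ x v r, |Tfree t f x v r| ≤ γ' v r := fun x v r => hdom _ v r
    have hsig := sigma_iterated hmeasT hdomT hγint x
    rw [hsig]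
    rfl
  · have hswap := integral_swap_uIoc hK a b hBig hgbar_le
    rw [hswap]
    exact intervalIntegral.integral_congr fun z _ => (sigma_iterated hmeas hdom hγint z).symm

end Star

/-- Quasiparticle position formula: for `g ∈ 𝓖` and any reference point `(p, w)`,
`u_{g,v,t}(q) = C_{g,p}(q) + v t + j_{𝒞_p g}(p,w,t) + ∫_{p+wt}^{C_{g,p}(q)+vt} σ_{𝒯_t 𝒞_p g}`. -/
theorem stmt14 (g : ℝ → ℝ → ℝ → ℝ) (hg : MemG g) (v t q p w : ℝ) :
    uqp g v t q =
      Cfun g p q + v * t + jflow (Cop g p) p w t +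
        ∫ x in (p + w * t)..(Cfun g p q + v * t), sigmaF (Tfree t (Cop g p)) x := by
  obtain ⟨⟨⟨γ, ⟨hγnn, hγint⟩, hγF⟩, hσpos⟩, c, hc, hσle⟩ := hg
  have hσc : Continuous (sigmaF g) := sigma_cont_s14 ⟨hγnn, hγint⟩ hγF
  obtain ⟨hgmeas, hgnn, hgC1, hgdom, -⟩ := hγF
  have h1c : (0:ℝ) < 1 - c := by linarith
  have hCinvc : Continuous (Function.invFun (Cfun g p)) := Cinv_cont hσc hσpos hσle hc p
  -- properties of the contracted density
  have hfmeas : Measurable fun p' : ℝ × ℝ × ℝ => Cop g p p'.1 p'.2.1 p'.2.2 := by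
    have hnum : Measurable fun p' : ℝ × ℝ × ℝ =>
        g (Function.invFun (Cfun g p) p'.1) p'.2.1 p'.2.2 :=
      hgmeas.comp ((hCinvc.measurable.comp measurable_fst).prodMk measurable_snd)
    have hden : Measurable fun p' : ℝ × ℝ × ℝ =>
        1 - sigmaF g (Function.invFun (Cfun g p) p'.1) :=
      ((continuous_const.sub (hσc.comp hCinvc)).measurable).comp measurable_fst
    exact hnum.div hden
  have hfdom : ∀ x v' r, |Cop g p x v' r| ≤ γ v' r / (1 - c) := by
    intro x v' r
    have hy : 0 < 1 - sigmaF g (Function.invFun (Cfun g p) x) :=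
      one_sub_sigma_pos hσle hc _
    have hnn : 0 ≤ Cop g p x v' r := div_nonneg (hgnn _ _ _) hy.le
    rw [abs_of_nonneg hnn]
    exact div_le_div₀ (hγnn v' r) (hgdom _ _ _) h1c
      (by linarith [hσle (Function.invFun (Cfun g p) x)])
  have hfint : Integrable fun p' : ℝ × ℝ =>
      (p'.1 ^ 2 + p'.2 ^ 2 + 1) * (γ p'.1 p'.2 / (1 - c)) := by
    have heq : (fun p' : ℝ × ℝ => (p'.1 ^ 2 + p'.2 ^ 2 + 1) * (γ p'.1 p'.2 / (1 - c)))
        = fun p' : ℝ × ℝ => ((p'.1 ^ 2 + p'.2 ^ 2 + 1) * γ p'.1 p'.2) / (1 - c) :=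
      funext fun p' => by ring
    rw [heq]
    exact hγint.div_const _
  have hstar := jflow_key hfmeas hfdom hfint t p (Cfun g p q) w v
  -- translation identity
  have hCopfun : Cop g q = fun x v' r => Cop g p (x - (q - Cfun g p q)) v' r := by
    funext x v' r
    exact Cop_trans hσc hσpos hσle hc p q x v' r
  have hjq : jflow (Cop g q) q v t = jflow (Cop g p) (Cfun g p q) v t := by
    rw [hCopfun, jflow_shift, show q - (q - Cfun g p q) = Cfun g p q from by ring]
  have hs : (∫ x in p..(Cfun g p q), sigmaF (Cop g p) x) = q - Cfun g p q := by
    rw [integral_sigma_Cop hσc hσpos hσle hc p q, Cfun]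
    ring
  simp only [uqp]
  rw [hjq]
  linarith [hstar, hs]
end
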